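/- arXiv:2208.10873 — 8 statements merged into one kernel-verified Lean document; each statement's English description precedes it below -/
import Mathlib

section
/- Let φ be a Lie algebra automorphism of sl(2,ℝ) and let M be its matrix with respect to a basis (v₁,v₂,v₃) satisfying [v₁,v₂] = v₃, [v₁,v₃] = v₂, [v₂,v₃] = −v₁. Then det(M) = 1 and Mᵀ · I₂,₁ · M = I₂,₁, where I₂,₁ = diag(1,1,−1); that is, M belongs to SO(2,1). -/
open Matrix

private lemma coeff_eq3 {V : Type*} [AddCommGroup V] [Module ℝ V]
    (v : Module.Basis (Fin 3) ℝ V) {a b c a' b' c' : ℝ}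
    (h : a • v 0 + b • v 1 + c • v 2 = a' • v 0 + b' • v 1 + c' • v 2) :
    a = a' ∧ b = b' ∧ c = c' := by
  have h0 := congrArg (fun x => v.repr x 0) h
  have h1 := congrArg (fun x => v.repr x 1) h
  have h2 := congrArg (fun x => v.repr x 2) h
  simp [Module.Basis.repr_self_apply] at h0 h1 h2
  exact ⟨h0, h1, h2⟩

private lemma bracket_formula {L : Type*} [LieRing L] [LieAlgebra ℝ L]
    (v : Module.Basis (Fin 3) ℝ L)
    (h12 : ⁅v 0, v 1⁆ = v 2) (h13 : ⁅v 0, v 2⁆ = v 1) (h23 : ⁅v 1, v 2⁆ = -(v 0))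
    (x0 x1 x2 y0 y1 y2 : ℝ) :
    ⁅x0 • v 0 + x1 • v 1 + x2 • v 2, y0 • v 0 + y1 • v 1 + y2 • v 2⁆ =
      (-(x1 * y2 - x2 * y1)) • v 0 + (x0 * y2 - x2 * y0) • v 1 + (x0 * y1 - x1 * y0) • v 2 := by
  have h21 : ⁅v 1, v 0⁆ = -(v 2) := by rw [← lie_skew, h12]
  have h31 : ⁅v 2, v 0⁆ = -(v 1) := by rw [← lie_skew, h13]
  have h32 : ⁅v 2, v 1⁆ = v 0 := by rw [← lie_skew, h23, neg_neg]
  simp only [lie_add, add_lie, lie_smul, smul_lie, lie_self, smul_zero, zero_add, add_zero,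
    h12, h13, h23, h21, h31, h32, smul_neg]
  module

/-- A Lie algebra automorphism of `sl(2,ℝ)`, written as a matrix `M` with respect to a basis
`(v₁,v₂,v₃)` satisfying `[v₁,v₂]=v₃`, `[v₁,v₃]=v₂`, `[v₂,v₃]=−v₁`, satisfies `det M = 1`
and `Mᵀ·I₂,₁·M = I₂,₁` where `I₂,₁ = diag(1,1,−1)`; i.e. `M ∈ SO(2,1)`. -/
theorem sl2R_automorphism_in_SO21
    (v : Module.Basis (Fin 3) ℝ (LieAlgebra.SpecialLinear.sl (Fin 2) ℝ))
    (h12 : ⁅v 0, v 1⁆ = v 2)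
    (h13 : ⁅v 0, v 2⁆ = v 1)
    (h23 : ⁅v 1, v 2⁆ = -(v 0))
    (φ : LieAlgebra.SpecialLinear.sl (Fin 2) ℝ →ₗ[ℝ] LieAlgebra.SpecialLinear.sl (Fin 2) ℝ)
    (hφbij : Function.Bijective φ)
    (hφlie : ∀ x y : LieAlgebra.SpecialLinear.sl (Fin 2) ℝ, φ ⁅x, y⁆ = ⁅φ x, φ y⁆)
    (M : Matrix (Fin 3) (Fin 3) ℝ)
    (hM : M = LinearMap.toMatrix v v φ) :
    M.det = 1 ∧
    Mᵀ * Matrix.diagonal ![(1 : ℝ), 1, -1] * M = Matrix.diagonal ![(1 : ℝ), 1, -1] := by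
  set J : Matrix (Fin 3) (Fin 3) ℝ := Matrix.diagonal ![(1 : ℝ), 1, -1] with hJ
  -- express φ on the basis
  have hrep : ∀ j : Fin 3, φ (v j) = M 0 j • v 0 + M 1 j • v 1 + M 2 j • v 2 := by
    intro j
    have h := (v.sum_repr (φ (v j))).symm
    rw [Fin.sum_univ_three] at h
    simpa [hM, LinearMap.toMatrix_apply] using h
  have h32 : ⁅v 2, v 1⁆ = v 0 := by rw [← lie_skew, h23, neg_neg]
  -- the three structural equations
  have E1 := hφlie (v 0) (v 1)
  rw [h12, hrep 2, hrep 0, hrep 1,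
    bracket_formula v h12 h13 h23] at E1
  obtain ⟨e1a, e1b, e1c⟩ := coeff_eq3 v E1
  have E2 := hφlie (v 0) (v 2)
  rw [h13, hrep 1, hrep 0, hrep 2,
    bracket_formula v h12 h13 h23] at E2
  obtain ⟨e2a, e2b, e2c⟩ := coeff_eq3 v E2
  have E3 := hφlie (v 2) (v 1)
  rw [h32, hrep 0, hrep 2, hrep 1,
    bracket_formula v h12 h13 h23] at E3
  obtain ⟨e3a, e3b, e3c⟩ := coeff_eq3 v E3
  -- the adjugate identity
  have hadj : M.adjugate = J * Mᵀ * J := by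
    rw [Matrix.adjugate_fin_three]
    ext i j
    fin_cases i <;> fin_cases j <;>
      simp [hJ, Matrix.mul_apply, Fin.sum_univ_three, Matrix.diagonal] <;>
      first
        | linear_combination e1a | linear_combination -e1a
        | linear_combination e1b | linear_combination -e1b
        | linear_combination e1c | linear_combination -e1c
        | linear_combination e2a | linear_combination -e2a
        | linear_combination e2b | linear_combination -e2b
        | linear_combination e2c | linear_combination -e2c
        | linear_combination e3a | linear_combination -e3a
        | linear_combination e3b | linear_combination -e3b
        | linear_combination e3c | linear_combination -e3c
  -- invertibility of M
  have hdet0 : M.det ≠ 0 := by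
    set ψ := LinearEquiv.ofBijective φ hφbij with hψ
    have hcomp : (ψ.symm : _ →ₗ[ℝ] _) ∘ₗ φ = LinearMap.id := by
      exact LinearMap.ext fun x => ψ.symm_apply_apply x
    have hNM : LinearMap.toMatrix v v (ψ.symm : _ →ₗ[ℝ] _) * M = 1 := by
      rw [hM, ← LinearMap.toMatrix_comp v v v, hcomp, LinearMap.toMatrix_id]
    have := congrArg Matrix.det hNM
    rw [Matrix.det_mul, Matrix.det_one] at this
    intro h0
    rw [h0, mul_zero] at this
    exact zero_ne_one this
  -- det J = -1 and J * J = 1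
  have hdetJ : J.det = -1 := by
    simp [hJ, Matrix.det_diagonal, Fin.prod_univ_three]
  have hJJ : J * J = 1 := by
    ext i j
    fin_cases i <;> fin_cases j <;>
      simp [hJ, Matrix.mul_apply, Fin.sum_univ_three, Matrix.diagonal, Matrix.one_apply]
  -- det M = 1
  have hdetsq : M.det ^ 2 = M.det := by
    have h := congrArg Matrix.det hadj
    rw [Matrix.det_adjugate] at h
    simpa [Matrix.det_mul, Matrix.det_transpose, hdetJ] using h
  have hdet1 : M.det = 1 := by
    have : M.det * M.det = M.det * 1 := by rw [mul_one]; linear_combination hdetsq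
    exact mul_left_cancel₀ hdet0 this
  refine ⟨hdet1, ?_⟩
  have hadjM : M.adjugate * M = 1 := by
    rw [Matrix.adjugate_mul, hdet1, one_smul]
  have h1 : J * Mᵀ * J * M = 1 := by rw [← hadj]; exact hadjM
  calc Mᵀ * J * M = J * (J * Mᵀ * J * M) := by
        rw [show J * (J * Mᵀ * J * M) = (J * J) * (Mᵀ * J * M) by
            simp only [mul_assoc], hJJ, one_mul]
      _ = J := by rw [h1, mul_one]
end

section
/- Let ν₁, ν₂, ν₃ be real numbers with (ν₂ − ν₃)(ν₃ − ν₁) < 0, i.e. ν₃ < min{ν₁,ν₂} or ν₃ > max{ν₁,ν₂}. Then there exist real λ, β such that λ + βν₁ > 0, λ + βν₂ > 0, and λ + βν₃ < 0; consequently the quadratic form Q(z) = (λ + βν₁)z₁² + (λ + βν₂)z₂² − (λ + βν₃)z₃² is positive definite and is a first integral of the vector field E(z) = ((ν₂−ν₃) z₂z₃, (ν₃−ν₁) z₁z₃, (ν₂−ν₁) z₁z₂), so every maximal solution of ż = E(z) is defined on all of ℝ. -/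
open Set Metric

/-- The Euler–Arnold vector field on `ℝ × ℝ × ℝ`. -/
def eaF (ca cb cc : ℝ) (x : ℝ × ℝ × ℝ) : ℝ × ℝ × ℝ :=
  (ca * x.2.1 * x.2.2, cb * x.1 * x.2.2, cc * x.1 * x.2.1)

/-- The quadratic first integral. -/
def eaQ (A B C : ℝ) (x : ℝ × ℝ × ℝ) : ℝ :=
  A * x.1 ^ 2 + B * x.2.1 ^ 2 - C * x.2.2 ^ 2

/-- Radius bound for a level set of `eaQ`. -/
noncomputable def eaR (A B C c : ℝ) : ℝ :=
  Real.sqrt (c / A) + Real.sqrt (c / B) + Real.sqrt (c / (-C))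

lemma eaR_nonneg (A B C c : ℝ) : 0 ≤ eaR A B C c := by
  unfold eaR; positivity

lemma ea_bound {A B C : ℝ} (hA : 0 < A) (hB : 0 < B) (hC : C < 0) {c : ℝ}
    {x : ℝ × ℝ × ℝ} (hx : eaQ A B C x = c) : ‖x‖ ≤ eaR A B C c := by
  obtain ⟨x₁, x₂, x₃⟩ := x
  have h1 : -C * x₃ ^ 2 ≥ 0 := mul_nonneg (by linarith) (sq_nonneg _)
  have h2 : B * x₂ ^ 2 ≥ 0 := mul_nonneg hB.le (sq_nonneg _)
  have h3 : A * x₁ ^ 2 ≥ 0 := mul_nonneg hA.le (sq_nonneg _)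
  have hQ : A * x₁ ^ 2 + B * x₂ ^ 2 - C * x₃ ^ 2 = c := hx
  have e1 : |x₁| ≤ Real.sqrt (c / A) := by
    rw [← Real.sqrt_sq_eq_abs]
    apply Real.sqrt_le_sqrt
    rw [le_div_iff₀ hA]; nlinarith
  have e2 : |x₂| ≤ Real.sqrt (c / B) := by
    rw [← Real.sqrt_sq_eq_abs]
    apply Real.sqrt_le_sqrt
    rw [le_div_iff₀ hB]; nlinarith
  have e3 : |x₃| ≤ Real.sqrt (c / (-C)) := by
    rw [← Real.sqrt_sq_eq_abs]
    apply Real.sqrt_le_sqrt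
    rw [le_div_iff₀ (by linarith : (0:ℝ) < -C)]; nlinarith
  have n1 : Real.sqrt (c / A) ≥ 0 := Real.sqrt_nonneg _
  have n2 : Real.sqrt (c / B) ≥ 0 := Real.sqrt_nonneg _
  have n3 : Real.sqrt (c / (-C)) ≥ 0 := Real.sqrt_nonneg _
  show max ‖x₁‖ ‖((x₂ : ℝ), (x₃ : ℝ))‖ ≤ _
  rw [Prod.norm_def]
  simp only [Real.norm_eq_abs, eaR]
  refine max_le (by linarith) (max_le (by linarith) (by linarith))

/-- One scalar Lipschitz-type estimate. -/
lemma ea_est {k u1 u2 v1 v2 ρ D : ℝ} (h1 : |u1| ≤ ρ) (h2 : |v2| ≤ ρ)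
    (h3 : |u2 - v2| ≤ D) (h4 : |u1 - v1| ≤ D) :
    |k * u1 * u2 - k * v1 * v2| ≤ |k| * (2 * ρ * D) := by
  have key : k * u1 * u2 - k * v1 * v2 = k * (u1 * (u2 - v2) + v2 * (u1 - v1)) := by ring
  rw [key, abs_mul]
  have e0 : |u1 * (u2 - v2) + v2 * (u1 - v1)| ≤ |u1 * (u2 - v2)| + |v2 * (u1 - v1)| := abs_add_le _ _
  have e1 : |u1 * (u2 - v2)| ≤ ρ * D := by
    rw [abs_mul]
    exact mul_le_mul h1 h3 (abs_nonneg _) ((abs_nonneg u1).trans h1)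
  have e2 : |v2 * (u1 - v1)| ≤ ρ * D := by
    rw [abs_mul]
    exact mul_le_mul h2 h4 (abs_nonneg _) ((abs_nonneg v2).trans h2)
  nlinarith [abs_nonneg k]

lemma ea_lip (ca cb cc : ℝ) {ρ : ℝ} (hρ : 0 ≤ ρ) :
    LipschitzOnWith (2 * ρ * (|ca| + |cb| + |cc|)).toNNReal (eaF ca cb cc)
      (closedBall (0 : ℝ × ℝ × ℝ) ρ) := by
  rw [lipschitzOnWith_iff_dist_le_mul]
  intro x hx y hy
  rw [Real.coe_toNNReal _ (by positivity)]
  obtain ⟨x₁, x₂, x₃⟩ := x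
  obtain ⟨y₁, y₂, y₃⟩ := y
  rw [mem_closedBall_zero_iff] at hx hy
  have hD : 0 ≤ dist ((x₁, x₂, x₃) : ℝ × ℝ × ℝ) (y₁, y₂, y₃) := dist_nonneg
  have bx1 : |x₁| ≤ ρ := le_trans (norm_fst_le ((x₁,x₂,x₃) : ℝ×ℝ×ℝ)) hx
  have bx2 : |x₂| ≤ ρ := le_trans (le_trans (norm_fst_le ((x₂,x₃):ℝ×ℝ)) (norm_snd_le ((x₁,x₂,x₃) : ℝ×ℝ×ℝ))) hx
  have bx3 : |x₃| ≤ ρ := le_trans (le_trans (norm_snd_le ((x₂,x₃):ℝ×ℝ)) (norm_snd_le ((x₁,x₂,x₃) : ℝ×ℝ×ℝ))) hx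
  have by1 : |y₁| ≤ ρ := le_trans (norm_fst_le ((y₁,y₂,y₃) : ℝ×ℝ×ℝ)) hy
  have by2 : |y₂| ≤ ρ := le_trans (le_trans (norm_fst_le ((y₂,y₃):ℝ×ℝ)) (norm_snd_le ((y₁,y₂,y₃) : ℝ×ℝ×ℝ))) hy
  have by3 : |y₃| ≤ ρ := le_trans (le_trans (norm_snd_le ((y₂,y₃):ℝ×ℝ)) (norm_snd_le ((y₁,y₂,y₃) : ℝ×ℝ×ℝ))) hy
  set D := dist ((x₁, x₂, x₃) : ℝ × ℝ × ℝ) (y₁, y₂, y₃) with hDdef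
  have d1 : |x₁ - y₁| ≤ D := by
    calc |x₁ - y₁| = dist x₁ y₁ := (Real.dist_eq _ _).symm
    _ ≤ D := by rw [hDdef, Prod.dist_eq]; exact le_sup_left
  have d2 : |x₂ - y₂| ≤ D := by
    calc |x₂ - y₂| = dist x₂ y₂ := (Real.dist_eq _ _).symm
    _ ≤ D := by
        rw [hDdef, Prod.dist_eq, Prod.dist_eq]
        exact le_sup_of_le_right le_sup_left
  have d3 : |x₃ - y₃| ≤ D := by
    calc |x₃ - y₃| = dist x₃ y₃ := (Real.dist_eq _ _).symm
    _ ≤ D := by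
        rw [hDdef, Prod.dist_eq, Prod.dist_eq]
        exact le_sup_of_le_right le_sup_right
  have c1 : |ca * x₂ * x₃ - ca * y₂ * y₃| ≤ |ca| * (2 * ρ * D) := ea_est bx2 by3 d3 d2
  have c2 : |cb * x₁ * x₃ - cb * y₁ * y₃| ≤ |cb| * (2 * ρ * D) := ea_est bx1 by3 d3 d1
  have c3 : |cc * x₁ * x₂ - cc * y₁ * y₂| ≤ |cc| * (2 * ρ * D) := ea_est bx1 by2 d2 d1
  have habs : ∀ u v : ℝ, dist u v = |u - v| := fun u v => Real.dist_eq u v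
  rw [eaF, eaF, Prod.dist_eq, Prod.dist_eq]
  simp only [habs]
  have hca : 0 ≤ |ca| := abs_nonneg _
  have hcb : 0 ≤ |cb| := abs_nonneg _
  have hcc : 0 ≤ |cc| := abs_nonneg _
  refine max_le ?_ (max_le ?_ ?_) <;>
    nlinarith [mul_nonneg (mul_nonneg hρ hD) hca, mul_nonneg (mul_nonneg hρ hD) hcb,
      mul_nonneg (mul_nonneg hρ hD) hcc]

lemma ea_norm_le (ca cb cc : ℝ) {ρ : ℝ} (hρ : 0 ≤ ρ) {x : ℝ × ℝ × ℝ}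
    (hx : x ∈ closedBall (0 : ℝ × ℝ × ℝ) ρ) :
    ‖eaF ca cb cc x‖ ≤ (|ca| + |cb| + |cc|) * ρ ^ 2 := by
  obtain ⟨x₁, x₂, x₃⟩ := x
  rw [mem_closedBall_zero_iff] at hx
  have bx1 : |x₁| ≤ ρ := le_trans (norm_fst_le ((x₁,x₂,x₃) : ℝ×ℝ×ℝ)) hx
  have bx2 : |x₂| ≤ ρ := le_trans (le_trans (norm_fst_le ((x₂,x₃):ℝ×ℝ)) (norm_snd_le ((x₁,x₂,x₃) : ℝ×ℝ×ℝ))) hx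
  have bx3 : |x₃| ≤ ρ := le_trans (le_trans (norm_snd_le ((x₂,x₃):ℝ×ℝ)) (norm_snd_le ((x₁,x₂,x₃) : ℝ×ℝ×ℝ))) hx
  have hca : 0 ≤ |ca| := abs_nonneg _
  have hcb : 0 ≤ |cb| := abs_nonneg _
  have hcc : 0 ≤ |cc| := abs_nonneg _
  have key : ∀ k u v : ℝ, |u| ≤ ρ → |v| ≤ ρ → |k * u * v| ≤ |k| * ρ ^ 2 := by
    intro k u v hu hv
    rw [abs_mul, abs_mul, sq, mul_assoc]
    refine mul_le_mul_of_nonneg_left ?_ (abs_nonneg k)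
    exact mul_le_mul hu hv (abs_nonneg _) ((abs_nonneg u).trans hu)
  have e1 : |ca * x₂ * x₃| ≤ |ca| * ρ ^ 2 := key _ _ _ bx2 bx3
  have e2 : |cb * x₁ * x₃| ≤ |cb| * ρ ^ 2 := key _ _ _ bx1 bx3
  have e3 : |cc * x₁ * x₂| ≤ |cc| * ρ ^ 2 := key _ _ _ bx1 bx2
  rw [eaF]
  show max ‖_‖ (max ‖_‖ ‖_‖) ≤ _
  simp only [Real.norm_eq_abs]
  have hρ2 : 0 ≤ ρ ^ 2 := sq_nonneg _
  refine max_le ?_ (max_le ?_ ?_) <;> nlinarith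

/-- The derivative of `Q` along a (componentwise) solution vanishes. -/
lemma ea_qderiv_comp {A B C ca cb cc : ℝ} (hid : A * ca + B * cb - C * cc = 0)
    {w₁ w₂ w₃ : ℝ → ℝ} {t : ℝ}
    (h1 : HasDerivAt w₁ (ca * w₂ t * w₃ t) t)
    (h2 : HasDerivAt w₂ (cb * w₁ t * w₃ t) t)
    (h3 : HasDerivAt w₃ (cc * w₁ t * w₂ t) t) :
    HasDerivAt (fun t => A * w₁ t ^ 2 + B * w₂ t ^ 2 - C * w₃ t ^ 2) 0 t := by
  have e1 : HasDerivAt (fun t => w₁ t ^ 2) (2 * w₁ t * (ca * w₂ t * w₃ t)) t := by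
    simpa using h1.fun_pow 2
  have e2 : HasDerivAt (fun t => w₂ t ^ 2) (2 * w₂ t * (cb * w₁ t * w₃ t)) t := by
    simpa using h2.fun_pow 2
  have e3 : HasDerivAt (fun t => w₃ t ^ 2) (2 * w₃ t * (cc * w₁ t * w₂ t)) t := by
    simpa using h3.fun_pow 2
  have H := ((e1.const_mul A).add (e2.const_mul B)).sub (e3.const_mul C)
  have hzero : A * (2 * w₁ t * (ca * w₂ t * w₃ t)) + B * (2 * w₂ t * (cb * w₁ t * w₃ t))
      - C * (2 * w₃ t * (cc * w₁ t * w₂ t)) = 0 := by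
    linear_combination (2 * w₁ t * w₂ t * w₃ t) * hid
  rwa [hzero] at H

/-- The derivative of `Q` along a product-valued solution vanishes. -/
lemma ea_qderiv {A B C ca cb cc : ℝ} (hid : A * ca + B * cb - C * cc = 0)
    {w : ℝ → ℝ × ℝ × ℝ} {t : ℝ} (hw : HasDerivAt w (eaF ca cb cc (w t)) t) :
    HasDerivAt (fun t => eaQ A B C (w t)) 0 t :=
  ea_qderiv_comp hid hw.fst hw.snd.fst hw.snd.snd

/-- `Q` is constant along solutions on an open interval. -/
lemma ea_qconst {A B C ca cb cc : ℝ} (hid : A * ca + B * cb - C * cc = 0)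
    {w : ℝ → ℝ × ℝ × ℝ} {p q : ℝ}
    (hw : ∀ t ∈ Ioo p q, HasDerivAt w (eaF ca cb cc (w t)) t) :
    ∀ t ∈ Ioo p q, ∀ s ∈ Ioo p q, eaQ A B C (w t) = eaQ A B C (w s) := by
  have key : ∀ t ∈ Ioo p q, ∀ s ∈ Ioo p q, s ≤ t → eaQ A B C (w t) = eaQ A B C (w s) := by
    intro t ht s hs hst
    have hsub : Icc s t ⊆ Ioo p q := fun x hx => ⟨lt_of_lt_of_le hs.1 hx.1, lt_of_le_of_lt hx.2 ht.2⟩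
    have := constant_of_has_deriv_right_zero (f := fun u => eaQ A B C (w u)) (a := s) (b := t)
      (fun x hx => ((ea_qderiv hid (hw x (hsub hx))).continuousAt).continuousWithinAt)
      (fun x hx => (ea_qderiv hid (hw x (hsub (Ico_subset_Icc_self hx)))).hasDerivWithinAt)
    exact this t ⟨hst, le_refl t⟩
  intro t ht s hs
  rcases le_total s t with hst | hst
  · exact key t ht s hs hst
  · exact (key s hs t ht hst).symm

/-- Reflection symmetry of the Euler–Arnold field. -/
lemma ea_reflect {ca cb cc : ℝ} {w : ℝ → ℝ × ℝ × ℝ} {p q : ℝ}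
    (hw : ∀ t ∈ Ioo p q, HasDerivAt w (eaF ca cb cc (w t)) t) :
    ∀ t ∈ Ioo (-q) (-p),
      HasDerivAt (fun t => (((w (-t)).1, (w (-t)).2.1, -(w (-t)).2.2) : ℝ × ℝ × ℝ))
        (eaF ca cb cc ((w (-t)).1, (w (-t)).2.1, -(w (-t)).2.2)) t := by
  intro t ht
  have hmem : -t ∈ Ioo p q := ⟨by cases ht; linarith, by cases ht; linarith⟩
  have h := hw (-t) hmem
  have hneg : HasDerivAt (fun s : ℝ => w (-s)) (-(eaF ca cb cc (w (-t)))) t := by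
    have := h.scomp t (hasDerivAt_neg t)
    simpa [Function.comp_def] using this
  have c1 : HasDerivAt (fun s => (w (-s)).1) (-(eaF ca cb cc (w (-t))).1) t := hneg.fst
  have c2 : HasDerivAt (fun s => (w (-s)).2.1) (-(eaF ca cb cc (w (-t))).2.1) t := hneg.snd.fst
  have c3' : HasDerivAt (fun s => (w (-s)).2.2) (-(eaF ca cb cc (w (-t))).2.2) t := hneg.snd.snd
  have H : HasDerivAt (fun t => (((w (-t)).1, (w (-t)).2.1, -(w (-t)).2.2) : ℝ × ℝ × ℝ))
      ((-(eaF ca cb cc (w (-t))).1, -(eaF ca cb cc (w (-t))).2.1,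
        -(-(eaF ca cb cc (w (-t))).2.2)) : ℝ × ℝ × ℝ) t :=
    c1.prodMk (c2.prodMk c3'.neg)
  have heq : (eaF ca cb cc ((w (-t)).1, (w (-t)).2.1, -(w (-t)).2.2) : ℝ × ℝ × ℝ)
      = ((-(eaF ca cb cc (w (-t))).1, -(eaF ca cb cc (w (-t))).2.1,
        -(-(eaF ca cb cc (w (-t))).2.2)) : ℝ × ℝ × ℝ) := by
    simp only [eaF, neg_neg, Prod.mk.injEq]
    exact ⟨by ring, by ring, trivial⟩
  rw [heq]
  exact H

lemma ea_q_reflect (A B C : ℝ) (x : ℝ × ℝ × ℝ) :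
    eaQ A B C (x.1, x.2.1, -x.2.2) = eaQ A B C x := by
  simp only [eaQ]; ring

/-- One-step right extension of a solution with conserved `Q`-value `c`,
by a uniform time `ε` depending only on the data. -/
lemma ea_ext_right {A B C ca cb cc : ℝ} (hA : 0 < A) (hB : 0 < B) (hC : C < 0)
    (hid : A * ca + B * cb - C * cc = 0) (c δ : ℝ) (hδ : 0 < δ) :
    ∃ ε > 0, ∀ p q : ℝ, ∀ w : ℝ → ℝ × ℝ × ℝ, p + δ ≤ q →
      (∀ t ∈ Ioo p q, HasDerivAt w (eaF ca cb cc (w t)) t) →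
      (∀ t ∈ Ioo p q, eaQ A B C (w t) = c) →
      ∃ w' : ℝ → ℝ × ℝ × ℝ, (∀ t ∈ Ioo p q, w' t = w t) ∧
        (∀ t ∈ Ioo p (q + ε), HasDerivAt w' (eaF ca cb cc (w' t)) t) ∧
        (∀ t ∈ Ioo p (q + ε), eaQ A B C (w' t) = c) := by
  set r := eaR A B C c with hrdef
  have hr : 0 ≤ r := eaR_nonneg A B C c
  set ρ := r + 1 with hρdef
  have hρ : 0 ≤ ρ := by linarith
  set S := |ca| + |cb| + |cc| with hSdef
  have hS : 0 ≤ S := by positivity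
  set M := S * ρ ^ 2 with hMdef
  have hM : 0 ≤ M := by positivity
  set τ := min (1 / (M + 1)) δ with hτdef
  have hτ : 0 < τ := lt_min (by positivity) hδ
  refine ⟨τ / 2, by positivity, ?_⟩
  intro p q w hpq hw hQ
  set t₁ := q - τ / 2 with ht₁def
  have hτδ : τ ≤ δ := min_le_right _ _
  have ht₁ : t₁ ∈ Ioo p q := ⟨by simp only [ht₁def]; linarith, by simp only [ht₁def]; linarith⟩
  have hx₁ : ‖w t₁‖ ≤ r := ea_bound hA hB hC (hQ t₁ ht₁)
  -- Picard–Lindelöf local solution centred at `t₁`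
  have hpl : IsPicardLindelof (fun _ => eaF ca cb cc) (tmin := t₁ - τ) (tmax := t₁ + τ)
      ⟨t₁, ⟨by linarith, by linarith⟩⟩ (w t₁) 1 0 M.toNNReal (2 * ρ * S).toNNReal := by
    have hsub : closedBall (w t₁) 1 ⊆ closedBall (0 : ℝ × ℝ × ℝ) ρ := by
      apply closedBall_subset_closedBall'
      rw [dist_zero_right]; linarith
    refine ⟨fun t _ => (ea_lip ca cb cc hρ).mono (by simpa using hsub),
      fun x _ => continuousOn_const,
      fun t _ x hx => (ea_norm_le ca cb cc hρ (hsub (by simpa using hx))).trans (Real.le_coe_toNNReal M), ?_⟩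
    simp only [Real.coe_toNNReal _ hM, NNReal.coe_one, NNReal.coe_zero, sub_zero]
    show M * max (t₁ + τ - t₁) (t₁ - (t₁ - τ)) ≤ 1
    have hmax : max (t₁ + τ - t₁) (t₁ - (t₁ - τ)) = τ := by
      rw [max_eq_left (by linarith : t₁ - (t₁ - τ) ≤ t₁ + τ - t₁)]; ring
    rw [hmax]
    have h1 : τ ≤ 1 / (M + 1) := min_le_left _ _
    have h2 : M * τ ≤ M * (1 / (M + 1)) := mul_le_mul_of_nonneg_left h1 hM
    have h3 : M * (1 / (M + 1)) ≤ 1 := by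
      rw [mul_one_div, div_le_one (by linarith)]; linarith
    linarith
  obtain ⟨g, hg0, hg'⟩ := hpl.exists_eq_forall_mem_Icc_hasDerivWithinAt₀
  replace hg0 : g t₁ = w t₁ := hg0
  have hg : ∀ t ∈ Ioo (t₁ - τ) (t₁ + τ), HasDerivAt g (eaF ca cb cc (g t)) t :=
    fun t ht => (hg' t (Ioo_subset_Icc_self ht)).hasDerivAt (Icc_mem_nhds ht.1 ht.2)
  have ht₁mem : t₁ ∈ Ioo (t₁ - τ) (t₁ + τ) := ⟨by linarith, by linarith⟩
  have hQg : ∀ t ∈ Ioo (t₁ - τ) (t₁ + τ), eaQ A B C (g t) = c := by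
    intro t ht
    have := ea_qconst hid hg t ht t₁ ht₁mem
    rw [this, hg0]
    exact hQ t₁ ht₁
  -- uniqueness of `w` and `g` on the overlap
  set m := max p (t₁ - τ) with hmdef
  have hmt₁ : m < t₁ := max_lt ht₁.1 (by linarith)
  have hJsub : Ioo m q ⊆ Ioo p q := Ioo_subset_Ioo (le_max_left _ _) le_rfl
  have hJsub' : Ioo m q ⊆ Ioo (t₁ - τ) (t₁ + τ) :=
    Ioo_subset_Ioo (le_max_right _ _) (by simp only [ht₁def]; linarith)
  have hJeq : EqOn w g (Ioo m q) := by
    apply ODE_solution_unique_of_mem_Ioo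
      (v := fun _ : ℝ => eaF ca cb cc) (s := fun _ : ℝ => closedBall (0 : ℝ × ℝ × ℝ) r)
      (fun _ _ => ea_lip ca cb cc hr) (⟨hmt₁, ht₁.2⟩ : t₁ ∈ Ioo m q)
    · intro t ht
      exact ⟨hw t (hJsub ht), mem_closedBall_zero_iff.mpr (ea_bound hA hB hC (hQ t (hJsub ht)))⟩
    · intro t ht
      exact ⟨hg t (hJsub' ht),
        mem_closedBall_zero_iff.mpr (ea_bound hA hB hC (hQg t (hJsub' ht)))⟩
    · exact hg0.symm
  -- glue
  refine ⟨fun t => if t < t₁ then w t else g t, ?_, ?_, ?_⟩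
  · intro t ht
    by_cases h : t < t₁
    · simp [h]
    · simp only [h, if_false]
      exact (hJeq ⟨lt_of_lt_of_le hmt₁ (not_lt.mp h), ht.2⟩).symm
  · intro t ht
    beta_reduce
    by_cases h : t < t₁
    · have hev : (fun t => if t < t₁ then w t else g t) =ᶠ[nhds t] w :=
        Filter.eventually_of_mem (Iio_mem_nhds h) (fun s hs => if_pos hs)
      rw [if_pos h]
      exact hev.hasDerivAt_iff.mpr (hw t ⟨ht.1, lt_trans h ht₁.2⟩)
    · push_neg at h
      have htmem : t ∈ Ioo (t₁ - τ) (t₁ + τ) := by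
        refine ⟨by linarith, ?_⟩
        have : t < q + τ / 2 := ht.2
        simp only [ht₁def] at *
        linarith
      have hU : Ioo m (q + τ / 2) ∈ nhds t :=
        Ioo_mem_nhds (lt_of_lt_of_le hmt₁ h) ht.2
      have hev : (fun t => if t < t₁ then w t else g t) =ᶠ[nhds t] g := by
        refine Filter.eventually_of_mem hU (fun s hs => ?_)
        show (if s < t₁ then w s else g s) = g s
        by_cases h' : s < t₁
        · rw [if_pos h']
          exact hJeq ⟨hs.1, lt_trans h' ht₁.2⟩
        · rw [if_neg h']
      rw [if_neg (not_lt.mpr h)]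
      exact hev.hasDerivAt_iff.mpr (hg t htmem)
  · intro t ht
    beta_reduce
    by_cases h : t < t₁
    · rw [if_pos h]
      exact hQ t ⟨ht.1, lt_trans h ht₁.2⟩
    · push_neg at h
      rw [if_neg (not_lt.mpr h)]
      refine hQg t ⟨by linarith, ?_⟩
      have : t < q + τ / 2 := ht.2
      simp only [ht₁def] at *
      linarith

/-- Two-sided uniform extension step. -/
lemma ea_ext_both {A B C ca cb cc : ℝ} (hA : 0 < A) (hB : 0 < B) (hC : C < 0)
    (hid : A * ca + B * cb - C * cc = 0) (c δ : ℝ) (hδ : 0 < δ) :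
    ∃ ε > 0, ∀ p q : ℝ, ∀ w : ℝ → ℝ × ℝ × ℝ, p + δ ≤ q →
      (∀ t ∈ Ioo p q, HasDerivAt w (eaF ca cb cc (w t)) t) →
      (∀ t ∈ Ioo p q, eaQ A B C (w t) = c) →
      ∃ w' : ℝ → ℝ × ℝ × ℝ, (∀ t ∈ Ioo p q, w' t = w t) ∧
        (∀ t ∈ Ioo (p - ε) (q + ε), HasDerivAt w' (eaF ca cb cc (w' t)) t) ∧
        (∀ t ∈ Ioo (p - ε) (q + ε), eaQ A B C (w' t) = c) := by
  obtain ⟨ε, hε, H⟩ := ea_ext_right hA hB hC hid c δ hδ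
  refine ⟨ε, hε, ?_⟩
  intro p q w hpq hw hQ
  obtain ⟨w1, ha1, hs1, hq1⟩ := H p q w hpq hw hQ
  -- reflect, extend right, reflect back
  set u := fun t : ℝ => (((w1 (-t)).1, (w1 (-t)).2.1, -(w1 (-t)).2.2) : ℝ × ℝ × ℝ) with hudef
  have hu : ∀ t ∈ Ioo (-(q + ε)) (-p), HasDerivAt u (eaF ca cb cc (u t)) t := ea_reflect hs1
  have hQu : ∀ t ∈ Ioo (-(q + ε)) (-p), eaQ A B C (u t) = c := by
    intro t ht
    have : eaQ A B C (u t) = eaQ A B C (w1 (-t)) := ea_q_reflect A B C (w1 (-t))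
    rw [this]
    exact hq1 (-t) ⟨by cases ht; linarith, by cases ht; linarith⟩
  obtain ⟨u1, hb1, hs2, hq2⟩ := H (-(q + ε)) (-p) u (by linarith) hu hQu
  set w' := fun t : ℝ => (((u1 (-t)).1, (u1 (-t)).2.1, -(u1 (-t)).2.2) : ℝ × ℝ × ℝ) with hw'def
  have hw' : ∀ t ∈ Ioo (p - ε) (q + ε), HasDerivAt w' (eaF ca cb cc (w' t)) t := by
    have h := ea_reflect (p := -(q + ε)) (q := -p + ε) hs2
    intro t ht
    exact h t ⟨by cases ht; linarith, by cases ht; linarith⟩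
  have hagree1 : ∀ t ∈ Ioo p (q + ε), w' t = w1 t := by
    intro t ht
    have hmem : -t ∈ Ioo (-(q + ε)) (-p) := ⟨by cases ht; linarith, by cases ht; linarith⟩
    have : u1 (-t) = u (-t) := hb1 (-t) hmem
    simp only [hw'def, this, hudef, neg_neg]
  refine ⟨w', ?_, hw', ?_⟩
  · intro t ht
    rw [hagree1 t ⟨ht.1, by cases ht; linarith⟩]
    exact ha1 t ht
  · intro t ht
    have : eaQ A B C (w' t) = eaQ A B C (u1 (-t)) := ea_q_reflect A B C (u1 (-t))
    rw [this]
    exact hq2 (-t) ⟨by cases ht; linarith, by cases ht; linarith⟩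

/-- Global extension of a local solution on a nonempty open interval. -/
lemma ea_global {A B C ca cb cc : ℝ} (hA : 0 < A) (hB : 0 < B) (hC : C < 0)
    (hid : A * ca + B * cb - C * cc = 0) {a b : ℝ} (hab : a < b)
    {z : ℝ → ℝ × ℝ × ℝ} (hz : ∀ t ∈ Ioo a b, HasDerivAt z (eaF ca cb cc (z t)) t) :
    ∃ w : ℝ → ℝ × ℝ × ℝ, (∀ t ∈ Ioo a b, w t = z t) ∧
      ∀ t : ℝ, HasDerivAt w (eaF ca cb cc (w t)) t := by
  classical
  set t₀ := (a + b) / 2 with ht₀def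
  have ht₀ : t₀ ∈ Ioo a b := ⟨by simp only [ht₀def]; linarith, by simp only [ht₀def]; linarith⟩
  set c := eaQ A B C (z t₀) with hcdef
  have hQz : ∀ t ∈ Ioo a b, eaQ A B C (z t) = c := fun t ht => ea_qconst hid hz t ht t₀ ht₀
  obtain ⟨ε, hε, H⟩ := ea_ext_both hA hB hC hid c (b - a) (by linarith)
  have Hn : ∀ n : ℕ, ∃ w : ℝ → ℝ × ℝ × ℝ, (∀ t ∈ Ioo a b, w t = z t) ∧
      (∀ t ∈ Ioo (a - n * ε) (b + n * ε), HasDerivAt w (eaF ca cb cc (w t)) t) ∧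
      (∀ t ∈ Ioo (a - n * ε) (b + n * ε), eaQ A B C (w t) = c) := by
    intro n
    induction n with
    | zero => exact ⟨z, fun t _ => rfl, by simpa using hz, by simpa using hQz⟩
    | succ n ih =>
      obtain ⟨w, h1, h2, h3⟩ := ih
      have hnn : (0 : ℝ) ≤ (n : ℝ) * ε := mul_nonneg n.cast_nonneg hε.le
      obtain ⟨w', h1', h2', h3'⟩ := H (a - n * ε) (b + n * ε) w (by linarith) h2 h3
      have hIsub : Ioo a b ⊆ Ioo (a - n * ε) (b + n * ε) :=
        Ioo_subset_Ioo (by linarith) (by linarith)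
      refine ⟨w', fun t ht => ?_, fun t ht => ?_, fun t ht => ?_⟩
      · rw [h1' t (hIsub ht)]; exact h1 t ht
      · refine h2' t ⟨?_, ?_⟩
        · have := ht.1; push_cast at this ⊢; linarith
        · have := ht.2; push_cast at this ⊢; linarith
      · refine h3' t ⟨?_, ?_⟩
        · have := ht.1; push_cast at this ⊢; linarith
        · have := ht.2; push_cast at this ⊢; linarith
  choose W hWz hWs hWq using Hn
  have hIn : ∀ n : ℕ, Ioo a b ⊆ Ioo (a - n * ε) (b + n * ε) := by
    intro n
    have hnn : (0 : ℝ) ≤ (n : ℝ) * ε := mul_nonneg n.cast_nonneg hε.le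
    exact Ioo_subset_Ioo (by linarith) (by linarith)
  have hr := eaR_nonneg A B C c
  have hcoh : ∀ m n : ℕ, n ≤ m → ∀ t ∈ Ioo (a - n * ε) (b + n * ε), W m t = W n t := by
    intro m n hnm
    have hc : (n : ℝ) * ε ≤ (m : ℝ) * ε :=
      mul_le_mul_of_nonneg_right (Nat.cast_le.mpr hnm) hε.le
    have hsub : Ioo (a - n * ε) (b + n * ε) ⊆ Ioo (a - m * ε) (b + m * ε) :=
      Ioo_subset_Ioo (by linarith) (by linarith)
    apply ODE_solution_unique_of_mem_Ioo
      (v := fun _ : ℝ => eaF ca cb cc)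
      (s := fun _ : ℝ => closedBall (0 : ℝ × ℝ × ℝ) (eaR A B C c))
      (fun _ _ => ea_lip ca cb cc hr) (hIn n ht₀)
    · intro t ht
      exact ⟨hWs m t (hsub ht),
        mem_closedBall_zero_iff.mpr (ea_bound hA hB hC (hWq m t (hsub ht)))⟩
    · intro t ht
      exact ⟨hWs n t ht, mem_closedBall_zero_iff.mpr (ea_bound hA hB hC (hWq n t ht))⟩
    · rw [hWz m t₀ ht₀, hWz n t₀ ht₀]
  have hex : ∀ t : ℝ, ∃ n : ℕ, t ∈ Ioo (a - n * ε) (b + n * ε) := by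
    intro t
    obtain ⟨n, hn⟩ := exists_nat_gt (max (a - t) (t - b) / ε)
    rw [div_lt_iff₀ hε] at hn
    have h1 : a - t ≤ max (a - t) (t - b) := le_max_left _ _
    have h2 : t - b ≤ max (a - t) (t - b) := le_max_right _ _
    exact ⟨n, by constructor <;> linarith⟩
  set N := fun t : ℝ => Nat.find (hex t) with hNdef
  set w := fun t : ℝ => W (N t) t with hwdef
  have hkey : ∀ n : ℕ, ∀ t ∈ Ioo (a - n * ε) (b + n * ε), w t = W n t := by
    intro n t ht
    have hNt := Nat.find_spec (hex t)
    rcases le_total (N t) n with h | h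
    · exact (hcoh n (N t) h t hNt).symm
    · exact hcoh (N t) n h t ht
  refine ⟨w, fun t ht => ?_, fun t => ?_⟩
  · rw [hkey 0 t (by simpa using ht)]
    exact hWz 0 t ht
  · obtain ⟨n, hn⟩ := hex t
    have hev : w =ᶠ[nhds t] W n :=
      Filter.eventually_of_mem (Ioo_mem_nhds hn.1 hn.2) (fun s hs => hkey n s hs)
    rw [hkey n t hn]
    exact hev.hasDerivAt_iff.mpr (hWs n t hn)

lemma ea_choose (ν₁ ν₂ ν₃ : ℝ) (h : (ν₂ - ν₃) * (ν₃ - ν₁) < 0) :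
    ∃ l β : ℝ, 0 < l + β * ν₁ ∧ 0 < l + β * ν₂ ∧ l + β * ν₃ < 0 := by
  rcases mul_neg_iff.mp h with ⟨h1, h2⟩ | ⟨h1, h2⟩
  · rcases le_total ν₁ ν₂ with hl | hl
    · exact ⟨-(ν₃ + ν₁) / 2, 1, by linarith, by linarith, by linarith⟩
    · exact ⟨-(ν₃ + ν₂) / 2, 1, by linarith, by linarith, by linarith⟩
  · rcases le_total ν₁ ν₂ with hl | hl
    · exact ⟨(ν₃ + ν₂) / 2, -1, by linarith, by linarith, by linarith⟩
    · exact ⟨(ν₃ + ν₁) / 2, -1, by linarith, by linarith, by linarith⟩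


/-- If `(ν₂−ν₃)(ν₃−ν₁) < 0`, there exist `λ, β` with `λ+βν₁ > 0`, `λ+βν₂ > 0`, `λ+βν₃ < 0`;
the resulting quadratic form `Q(z) = (λ+βν₁)z₁² + (λ+βν₂)z₂² − (λ+βν₃)z₃²` is positive
definite and a first integral of the Euler-Arnold vector field
`E(z) = ((ν₂−ν₃)z₂z₃, (ν₃−ν₁)z₁z₃, (ν₂−ν₁)z₁z₂)`, and every maximal solution of `ż = E(z)`
is defined on all of `ℝ`. -/
theorem eulerArnold_diag_complete_of_neg
    (ν₁ ν₂ ν₃ : ℝ) (h : (ν₂ - ν₃) * (ν₃ - ν₁) < 0) :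
    (∃ l β : ℝ, (0 < l + β * ν₁) ∧ (0 < l + β * ν₂) ∧ (l + β * ν₃ < 0) ∧
      (∀ p q r : ℝ, ¬(p = 0 ∧ q = 0 ∧ r = 0) →
        0 < (l + β * ν₁) * p^2 + (l + β * ν₂) * q^2 - (l + β * ν₃) * r^2) ∧
      (∀ (z₁ z₂ z₃ : ℝ → ℝ),
        (∀ t, HasDerivAt z₁ ((ν₂ - ν₃) * z₂ t * z₃ t) t) →
        (∀ t, HasDerivAt z₂ ((ν₃ - ν₁) * z₁ t * z₃ t) t) →
        (∀ t, HasDerivAt z₃ ((ν₂ - ν₁) * z₁ t * z₂ t) t) →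
        ∀ t s : ℝ,
          (l + β * ν₁) * (z₁ t)^2 + (l + β * ν₂) * (z₂ t)^2 - (l + β * ν₃) * (z₃ t)^2
          = (l + β * ν₁) * (z₁ s)^2 + (l + β * ν₂) * (z₂ s)^2 - (l + β * ν₃) * (z₃ s)^2)) ∧
    (∀ (a b : ℝ) (z₁ z₂ z₃ : ℝ → ℝ),
      (∀ t ∈ Set.Ioo a b, HasDerivAt z₁ ((ν₂ - ν₃) * z₂ t * z₃ t) t) →
      (∀ t ∈ Set.Ioo a b, HasDerivAt z₂ ((ν₃ - ν₁) * z₁ t * z₃ t) t) →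
      (∀ t ∈ Set.Ioo a b, HasDerivAt z₃ ((ν₂ - ν₁) * z₁ t * z₂ t) t) →
      ∃ w₁ w₂ w₃ : ℝ → ℝ,
        (∀ t ∈ Set.Ioo a b, w₁ t = z₁ t ∧ w₂ t = z₂ t ∧ w₃ t = z₃ t) ∧
        (∀ t : ℝ, HasDerivAt w₁ ((ν₂ - ν₃) * w₂ t * w₃ t) t) ∧
        (∀ t : ℝ, HasDerivAt w₂ ((ν₃ - ν₁) * w₁ t * w₃ t) t) ∧
        (∀ t : ℝ, HasDerivAt w₃ ((ν₂ - ν₁) * w₁ t * w₂ t) t)) := by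
  obtain ⟨l, β, hA, hB, hC⟩ := ea_choose ν₁ ν₂ ν₃ h
  have hid : (l + β * ν₁) * (ν₂ - ν₃) + (l + β * ν₂) * (ν₃ - ν₁)
      - (l + β * ν₃) * (ν₂ - ν₁) = 0 := by ring
  constructor
  · refine ⟨l, β, hA, hB, hC, ?_, ?_⟩
    · intro p q r hne
      have hor : p ≠ 0 ∨ q ≠ 0 ∨ r ≠ 0 := by tauto
      have hBq : 0 ≤ (l + β * ν₂) * q ^ 2 := mul_nonneg hB.le (sq_nonneg q)
      have hAp : 0 ≤ (l + β * ν₁) * p ^ 2 := mul_nonneg hA.le (sq_nonneg p)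
      have hCr : 0 ≤ -(l + β * ν₃) * r ^ 2 := mul_nonneg (by linarith) (sq_nonneg r)
      rcases hor with hp | hq | hr
      · have : 0 < (l + β * ν₁) * p ^ 2 := mul_pos hA (by positivity)
        nlinarith
      · have : 0 < (l + β * ν₂) * q ^ 2 := mul_pos hB (by positivity)
        nlinarith
      · have : 0 < -(l + β * ν₃) * r ^ 2 := mul_pos (by linarith) (by positivity)
        nlinarith
    · intro z₁ z₂ z₃ h1 h2 h3 t s
      have hd : ∀ u : ℝ, HasDerivAt (fun u => (l + β * ν₁) * z₁ u ^ 2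
          + (l + β * ν₂) * z₂ u ^ 2 - (l + β * ν₃) * z₃ u ^ 2) 0 u :=
        fun u => ea_qderiv_comp hid (h1 u) (h2 u) (h3 u)
      exact is_const_of_deriv_eq_zero (fun u => (hd u).differentiableAt)
        (fun u => (hd u).deriv) t s
  · intro a b z₁ z₂ z₃ h1 h2 h3
    rcases le_or_gt b a with hba | hab
    · refine ⟨fun _ => 0, fun _ => 0, fun _ => 0, fun t ht =>
        absurd (ht.1.trans ht.2) (not_lt.mpr hba), fun t => ?_, fun t => ?_, fun t => ?_⟩ <;>
        simpa using hasDerivAt_const t (0 : ℝ)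
    · set z := fun t : ℝ => ((z₁ t, z₂ t, z₃ t) : ℝ × ℝ × ℝ) with hzdef
      have hz : ∀ t ∈ Ioo a b,
          HasDerivAt z (eaF (ν₂ - ν₃) (ν₃ - ν₁) (ν₂ - ν₁) (z t)) t :=
        fun t ht => (h1 t ht).prodMk ((h2 t ht).prodMk (h3 t ht))
      obtain ⟨w, hagree, hsol⟩ := ea_global hA hB hC hid hab hz
      refine ⟨fun t => (w t).1, fun t => (w t).2.1, fun t => (w t).2.2, ?_, ?_, ?_, ?_⟩
      · intro t ht
        have hw := hagree t ht
        exact ⟨congrArg Prod.fst hw, congrArg (fun x => x.2.1) hw,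
          congrArg (fun x => x.2.2) hw⟩
      · intro t; exact (hsol t).fst
      · intro t; exact (hsol t).snd.fst
      · intro t; exact (hsol t).snd.snd
end

section
/- Let a, b > 0 and c = a + b, and let E be the vector field on ℝ³ given by E(z₁,z₂,z₃) = (a z₂ z₃, b z₁ z₃, c z₁ z₂). Then the vector v = (√(a/c), √(b/c), 1) satisfies E(v) = √(ab) · v. Consequently, z(t) = v/(1 − √(ab)·t) is a solution of ż = E(z) with z(0) = v that blows up as t → 1/√(ab), and the vector field E is not complete. -/
open Filter Real

lemma vanish_of_linear_bound {T : ℝ} (C : ℝ) {f g : ℝ → ℝ}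
    (hf : ∀ t, HasDerivAt f (g t * f t) t)
    (hg : ∀ t ∈ Set.Icc (0:ℝ) T, |g t| ≤ C)
    (h0 : f 0 = 0) : ∀ t ∈ Set.Icc (0:ℝ) T, f t = 0 := by
  intro t ht
  have key := norm_le_gronwallBound_of_norm_deriv_right_le
    (f := f) (f' := fun t => g t * f t) (δ := 0) (K := C) (ε := 0) (a := 0) (b := T)
    (fun x _ => (hf x).continuousAt.continuousWithinAt)
    (fun x _ => (hf x).hasDerivWithinAt)
    (by simp [h0])
    (fun x hx => by
      have := hg x (Set.Ico_subset_Icc_self hx)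
      simp only [Real.norm_eq_abs, abs_mul, add_zero]
      exact mul_le_mul_of_nonneg_right this (abs_nonneg _))
  have h := key t ht
  rw [gronwallBound_ε0_δ0] at h
  exact abs_nonpos_iff.1 (by simpa using h)

lemma hasDerivAt_blowup {k t : ℝ} (s : ℝ) (hkt : 1 - k * t ≠ 0) :
    HasDerivAt (fun u : ℝ => (1 - k * u)⁻¹ * s)
      (k * (1 - k * t)⁻¹ * ((1 - k * t)⁻¹ * s)) t := by
  have h1 : HasDerivAt (fun u : ℝ => 1 - k * u) (-k) t := by
    simpa using ((hasDerivAt_id t).const_mul k).const_sub 1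
  have h2 := (h1.inv hkt).mul_const s
  refine h2.congr_deriv (Eq.symm ?_)
  rw [neg_neg, pow_two, div_eq_mul_inv, mul_inv]
  ring

/-- For `a, b > 0`, `c = a+b`, the vector `v = (√(a/c), √(b/c), 1)` is an idempotent of
`E(z) = (a z₂z₃, b z₁z₃, c z₁z₂)`: `E(v) = √(ab)·v`. Consequently `z(t) = v/(1−√(ab)t)` is a
solution through `v` blowing up as `t → 1/√(ab)`, and `E` is not complete. -/
theorem eulerArnold_diag_incomplete_of_pos
    (a b c : ℝ) (ha : 0 < a) (hb : 0 < b) (hc : c = a + b) :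
    (a * Real.sqrt (b / c) * 1 = Real.sqrt (a * b) * Real.sqrt (a / c) ∧
     b * Real.sqrt (a / c) * 1 = Real.sqrt (a * b) * Real.sqrt (b / c) ∧
     c * Real.sqrt (a / c) * Real.sqrt (b / c) = Real.sqrt (a * b) * 1) ∧
    ((1 - Real.sqrt (a * b) * 0)⁻¹ • (Real.sqrt (a / c), Real.sqrt (b / c), (1 : ℝ))
        = (Real.sqrt (a / c), Real.sqrt (b / c), (1 : ℝ))) ∧
    (∀ t ∈ Set.Iio (Real.sqrt (a * b))⁻¹,
      HasDerivAt (fun u : ℝ => (1 - Real.sqrt (a * b) * u)⁻¹ * Real.sqrt (a / c))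
        (a * ((1 - Real.sqrt (a * b) * t)⁻¹ * Real.sqrt (b / c))
           * ((1 - Real.sqrt (a * b) * t)⁻¹ * 1)) t ∧
      HasDerivAt (fun u : ℝ => (1 - Real.sqrt (a * b) * u)⁻¹ * Real.sqrt (b / c))
        (b * ((1 - Real.sqrt (a * b) * t)⁻¹ * Real.sqrt (a / c))
           * ((1 - Real.sqrt (a * b) * t)⁻¹ * 1)) t ∧
      HasDerivAt (fun u : ℝ => (1 - Real.sqrt (a * b) * u)⁻¹ * 1)
        (c * ((1 - Real.sqrt (a * b) * t)⁻¹ * Real.sqrt (a / c))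
           * ((1 - Real.sqrt (a * b) * t)⁻¹ * Real.sqrt (b / c))) t) ∧
    Tendsto (fun t : ℝ => (1 - Real.sqrt (a * b) * t)⁻¹)
      (nhdsWithin (Real.sqrt (a * b))⁻¹ (Set.Iio (Real.sqrt (a * b))⁻¹)) atTop ∧
    ¬ ∃ z₁ z₂ z₃ : ℝ → ℝ,
        z₁ 0 = Real.sqrt (a / c) ∧ z₂ 0 = Real.sqrt (b / c) ∧ z₃ 0 = 1 ∧
        (∀ t : ℝ, HasDerivAt z₁ (a * z₂ t * z₃ t) t) ∧
        (∀ t : ℝ, HasDerivAt z₂ (b * z₁ t * z₃ t) t) ∧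
        (∀ t : ℝ, HasDerivAt z₃ (c * z₁ t * z₂ t) t) := by
  have hc0 : 0 < c := by rw [hc]; positivity
  set k := Real.sqrt (a * b) with hkdef
  have hk : 0 < k := Real.sqrt_pos.2 (by positivity)
  -- the three algebraic identities
  have key1 : k * Real.sqrt (a / c) = a * Real.sqrt (b / c) := by
    rw [hkdef, ← Real.sqrt_mul (by positivity : (0:ℝ) ≤ a * b),
      show a * b * (a / c) = a ^ 2 * (b / c) by field_simp,
      Real.sqrt_mul (sq_nonneg a), Real.sqrt_sq ha.le]
  have key2 : k * Real.sqrt (b / c) = b * Real.sqrt (a / c) := by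
    rw [hkdef, ← Real.sqrt_mul (by positivity : (0:ℝ) ≤ a * b),
      show a * b * (b / c) = b ^ 2 * (a / c) by field_simp,
      Real.sqrt_mul (sq_nonneg b), Real.sqrt_sq hb.le]
  have key3 : c * Real.sqrt (a / c) * Real.sqrt (b / c) = k := by
    rw [hkdef, mul_assoc, ← Real.sqrt_mul (by positivity : (0:ℝ) ≤ a / c),
      show a / c * (b / c) = (a * b) / c ^ 2 by ring,
      Real.sqrt_div (by positivity : (0:ℝ) ≤ a * b), Real.sqrt_sq hc0.le]
    field_simp
  refine ⟨⟨by linarith [key1], by linarith [key2], by simpa using key3⟩, ?_, ?_, ?_, ?_⟩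
  · norm_num
  · -- derivatives of explicit solution
    intro t ht
    have hpos : 0 < 1 - k * t := by
      have : k * t < k * k⁻¹ := mul_lt_mul_of_pos_left ht hk
      rw [mul_inv_cancel₀ hk.ne'] at this
      linarith
    have hne : 1 - k * t ≠ 0 := hpos.ne'
    refine ⟨?_, ?_, ?_⟩
    · have h := hasDerivAt_blowup (Real.sqrt (a / c)) hne
      convert h using 1
      linear_combination ((1 - k * t)⁻¹ * (1 - k * t)⁻¹) * key1.symm
    · have h := hasDerivAt_blowup (Real.sqrt (b / c)) hne
      convert h using 1
      linear_combination ((1 - k * t)⁻¹ * (1 - k * t)⁻¹) * key2.symm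
    · have h := hasDerivAt_blowup (1 : ℝ) hne
      convert h using 1
      linear_combination ((1 - k * t)⁻¹ * (1 - k * t)⁻¹) * key3
  · -- blow-up
    have h1 : Tendsto (fun t : ℝ => 1 - k * t) (nhdsWithin k⁻¹ (Set.Iio k⁻¹))
        (nhdsWithin 0 (Set.Ioi 0)) := by
      apply tendsto_nhdsWithin_of_tendsto_nhds_of_eventually_within
      · have hco : Continuous fun t : ℝ => 1 - k * t := by continuity
        have h0 : Tendsto (fun t : ℝ => 1 - k * t) (nhds k⁻¹) (nhds 0) := by
          simpa [mul_inv_cancel₀ hk.ne'] using hco.tendsto k⁻¹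
        exact h0.mono_left nhdsWithin_le_nhds
      · filter_upwards [self_mem_nhdsWithin] with t ht
        have : k * t < k * k⁻¹ := mul_lt_mul_of_pos_left ht hk
        rw [mul_inv_cancel₀ hk.ne'] at this
        simpa using sub_pos.2 this
    exact h1.inv_tendsto_nhdsGT_zero
  · -- incompleteness
    rintro ⟨z₁, z₂, z₃, h10, h20, h30, h1, h2, h3⟩
    set sa := Real.sqrt a with hsa
    set sb := Real.sqrt b with hsb
    set sc := Real.sqrt c with hsc
    have haa : sa * sa = a := Real.mul_self_sqrt ha.le
    have hbb : sb * sb = b := Real.mul_self_sqrt hb.le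
    have hcc : sc * sc = c := Real.mul_self_sqrt hc0.le
    have hsa0 : 0 < sa := Real.sqrt_pos.2 ha
    have hsb0 : 0 < sb := Real.sqrt_pos.2 hb
    have hsc0 : 0 < sc := Real.sqrt_pos.2 hc0
    set y₀ := Real.sqrt (a / c) with hy₀
    have hy₀0 : 0 < y₀ := Real.sqrt_pos.2 (by positivity)
    set T : ℝ := (sb * sc * y₀)⁻¹ with hT
    have hT0 : 0 < T := by positivity
    -- continuity of solutions
    have hz₂c : Continuous z₂ := by
      rw [continuous_iff_continuousAt]; exact fun t => (h2 t).continuousAt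
    have hz₃c : Continuous z₃ := by
      rw [continuous_iff_continuousAt]; exact fun t => (h3 t).continuousAt
    -- first conserved ratio : sb z₁ - sa z₂ ≡ 0 on [0,T]
    obtain ⟨C₃, hC₃⟩ := isCompact_Icc.exists_bound_of_continuousOn
      (f := fun t => -(sa * sb * z₃ t)) (by fun_prop)
    have hw : ∀ t ∈ Set.Icc (0:ℝ) T, sb * z₁ t - sa * z₂ t = 0 := by
      apply vanish_of_linear_bound C₃ (g := fun t => -(sa * sb * z₃ t))
      · intro t
        have hd := ((h1 t).const_mul sb).sub ((h2 t).const_mul sa)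
        refine hd.congr_deriv (Eq.symm ?_)
        linear_combination (sb * z₂ t * z₃ t) * haa - (sa * z₁ t * z₃ t) * hbb
      · intro t htr; simpa only [Real.norm_eq_abs] using hC₃ t htr
      · rw [h10, h20, ← Real.sqrt_mul hb.le, ← Real.sqrt_mul ha.le,
          show b * (a / c) = a * (b / c) by ring, sub_self]
    obtain ⟨C₂, hC₂⟩ := isCompact_Icc.exists_bound_of_continuousOn
      (f := fun t => -(sa * sc * z₂ t)) (by fun_prop)
    have hu : ∀ t ∈ Set.Icc (0:ℝ) T, sc * z₁ t - sa * z₃ t = 0 := by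
      apply vanish_of_linear_bound C₂ (g := fun t => -(sa * sc * z₂ t))
      · intro t
        have hd := ((h1 t).const_mul sc).sub ((h3 t).const_mul sa)
        refine hd.congr_deriv (Eq.symm ?_)
        linear_combination (sc * z₂ t * z₃ t) * haa - (sa * z₁ t * z₂ t) * hcc
      · intro t htr; simpa only [Real.norm_eq_abs] using hC₂ t htr
      · rw [h10, h30, ← Real.sqrt_mul hc0.le,
          show c * (a / c) = a by field_simp, mul_one, sub_self]
    -- on [0,T], z₁' = sb*sc*z₁^2
    have hode : ∀ t ∈ Set.Icc (0:ℝ) T, a * z₂ t * z₃ t = sb * sc * z₁ t ^ 2 := by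
      intro t htr
      have e2 : sa * z₂ t = sb * z₁ t := by linarith [hw t htr]
      have e3 : sa * z₃ t = sc * z₁ t := by linarith [hu t htr]
      linear_combination (-(z₂ t * z₃ t)) * haa + (sa * z₃ t) * e2 + (sb * z₁ t) * e3
    -- z₁ is monotone on [0,T]
    have hmono : MonotoneOn z₁ (Set.Icc (0:ℝ) T) := by
      apply monotoneOn_of_deriv_nonneg (convex_Icc 0 T)
      · exact fun t _ => (h1 t).continuousAt.continuousWithinAt
      · exact fun t _ => ((h1 t).differentiableAt).differentiableWithinAt
      · intro t htI
        rw [interior_Icc] at htI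
        rw [(h1 t).deriv, hode t (Set.Ioo_subset_Icc_self htI)]
        positivity
    have hz₁pos : ∀ t ∈ Set.Icc (0:ℝ) T, 0 < z₁ t := by
      intro t htr
      have := hmono (Set.left_mem_Icc.2 hT0.le) htr htr.1
      rw [h10] at this
      linarith
    -- g = z₁⁻¹ + sb*sc*t is constant on [0,T]
    have hg : ∀ x ∈ Set.Icc (0:ℝ) T,
        (z₁ x)⁻¹ + sb * sc * x = (z₁ 0)⁻¹ + sb * sc * 0 := by
      apply constant_of_has_deriv_right_zero
      · apply ContinuousOn.add
        · exact ContinuousOn.inv₀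
            (fun t _ => (h1 t).continuousAt.continuousWithinAt)
            (fun t htr => (hz₁pos t htr).ne')
        · fun_prop
      · intro x hx
        have hxI : x ∈ Set.Icc (0:ℝ) T := Set.Ico_subset_Icc_self hx
        have hz : z₁ x ≠ 0 := (hz₁pos x hxI).ne'
        have hd1 : HasDerivAt (fun t : ℝ => sb * sc * t) (sb * sc) x := by
          simpa using (hasDerivAt_id x).const_mul (sb * sc)
        have hd := ((h1 x).inv hz).add hd1
        have hval : -(a * z₂ x * z₃ x) / z₁ x ^ 2 + sb * sc = 0 := by
          rw [hode x hxI]; field_simp; ring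
        rw [hval] at hd
        exact hd.hasDerivWithinAt
    have hgT := hg T (Set.right_mem_Icc.2 hT0.le)
    rw [h10] at hgT
    have hKT : sb * sc * T = y₀⁻¹ := by
      rw [hT]; field_simp
    have hzT : (z₁ T)⁻¹ = 0 := by
      rw [hKT] at hgT; linarith
    have := hz₁pos T (Set.right_mem_Icc.2 hT0.le)
    rw [inv_eq_zero] at hzT
    exact absurd hzT this.ne'
end

section
/- Let a, b be real constants and E the vector field on ℝ³ given by E(z₁,z₂,z₃) = (b z₃², −z₁(a z₂ + b z₃), a z₁ z₃). Then the function I(z) = −a z₁² + b z₃² is a first integral of E: it is constant along every differentiable solution of ż = E(z). If moreover ab < 0, then I restricted to the (z₁,z₃) variables is (up to sign) positive definite, so (z₁(t), z₃(t)) remains bounded along every solution. -/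
/-- A function with zero derivative on an open preconnected set is constant there. -/
lemma const_of_deriv_zero_open_preconn {s : Set ℝ} (hs : IsOpen s)
    (hconn : IsPreconnected s) {f : ℝ → ℝ} (hf : ∀ t ∈ s, HasDerivAt f 0 t) :
    ∀ t ∈ s, ∀ r ∈ s, f t = f r := by
  -- on any closed interval inside s, f is constant
  have key : ∀ c d : ℝ, c ≤ d → Set.Icc c d ⊆ s → f d = f c := by
    intro c d hcd hsub
    have hcont : ContinuousOn f (Set.Icc c d) := fun x hx =>
      ((hf x (hsub hx)).continuousAt).continuousWithinAt
    have hderiv : ∀ x ∈ Set.Ico c d, HasDerivWithinAt f 0 (Set.Ici x) x := fun x hx =>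
      (hf x (hsub ⟨hx.1, hx.2.le⟩)).hasDerivWithinAt
    exact constant_of_has_deriv_right_zero hcont hderiv d ⟨hcd, le_refl d⟩
  -- local constancy
  have loc : ∀ x ∈ s, ∃ ε > 0, ∀ y ∈ Metric.ball x ε, f y = f x := by
    intro x hx
    obtain ⟨ε, hε, hball⟩ := Metric.isOpen_iff.1 hs x hx
    refine ⟨ε, hε, fun y hy => ?_⟩
    have hIcc : ∀ u v : ℝ, u ∈ Metric.ball x ε → v ∈ Metric.ball x ε →
        Set.Icc u v ⊆ Metric.ball x ε :=
      fun u v hu hv => (convex_ball x ε).ordConnected.out hu hv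
    rcases le_total x y with h | h
    · exact key x y h ((hIcc x y (Metric.mem_ball_self hε) hy).trans hball)
    · exact (key y x h ((hIcc y x hy (Metric.mem_ball_self hε)).trans hball)).symm
  intro t ht r hr
  by_contra hne
  -- clopen argument
  set u : Set ℝ := {x | f x = f r} ∩ s with hu
  set v : Set ℝ := {x | f x ≠ f r} ∩ s with hv
  have hopen : ∀ (P : ℝ → Prop), IsOpen ({x | P (f x)} ∩ s) := by
    intro P
    rw [isOpen_iff_mem_nhds]
    rintro x ⟨hPx, hxs⟩
    obtain ⟨ε, hε, hb⟩ := loc x hxs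
    obtain ⟨δ, hδ, hb2⟩ := Metric.isOpen_iff.1 hs x hxs
    refine Filter.mem_of_superset (Metric.ball_mem_nhds x (lt_min hε hδ)) ?_
    intro y hy
    have hy1 : y ∈ Metric.ball x ε := Metric.ball_subset_ball (min_le_left _ _) hy
    have hy2 : y ∈ Metric.ball x δ := Metric.ball_subset_ball (min_le_right _ _) hy
    exact ⟨by simpa [hb y hy1] using hPx, hb2 hy2⟩
  have huo : IsOpen u := hopen (fun w => w = f r)
  have hvo : IsOpen v := hopen (fun w => w ≠ f r)
  obtain ⟨x, hxs, hxu, hxv⟩ :=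
    hconn u v huo hvo
      (fun x hx => by
        by_cases h : f x = f r
        · exact Or.inl ⟨h, hx⟩
        · exact Or.inr ⟨h, hx⟩)
      ⟨r, hr, rfl, hr⟩ ⟨t, ht, hne, ht⟩
  exact hxv.1 hxu.1

lemma bound_aux {α p d : ℝ} (hα : 0 < α) (h : α * p ^ 2 ≤ d) :
    |p| ≤ Real.sqrt (d / α) := by
  rw [← Real.sqrt_sq_eq_abs]
  apply Real.sqrt_le_sqrt
  rw [le_div_iff₀ hα]
  linarith

/-- For `E(z) = (b z₃², −z₁(a z₂ + b z₃), a z₁ z₃)`, the function `I(z) = −a z₁² + b z₃²` is a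
first integral; and if `ab < 0` then `I` is, up to sign, positive definite in `(z₁, z₃)`, so
`(z₁(t), z₃(t))` remains bounded along every solution. -/
theorem eulerArnold_case3_first_integral
    (a b : ℝ)
    (s : Set ℝ) (hs : IsOpen s) (hconn : IsPreconnected s)
    (z₁ z₂ z₃ : ℝ → ℝ)
    (h₁ : ∀ t ∈ s, HasDerivAt z₁ (b * (z₃ t)^2) t)
    (h₂ : ∀ t ∈ s, HasDerivAt z₂ (-(z₁ t * (a * z₂ t + b * z₃ t))) t)
    (h₃ : ∀ t ∈ s, HasDerivAt z₃ (a * z₁ t * z₃ t) t) :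
    (∀ t ∈ s, ∀ r ∈ s, -a * (z₁ t)^2 + b * (z₃ t)^2 = -a * (z₁ r)^2 + b * (z₃ r)^2) ∧
    (a * b < 0 →
      ((∀ p q : ℝ, ¬(p = 0 ∧ q = 0) → 0 < -a * p^2 + b * q^2) ∨
       (∀ p q : ℝ, ¬(p = 0 ∧ q = 0) → -a * p^2 + b * q^2 < 0)) ∧
      ∃ C : ℝ, ∀ t ∈ s, |z₁ t| ≤ C ∧ |z₃ t| ≤ C) := by
  set f : ℝ → ℝ := fun t => -a * (z₁ t) ^ 2 + b * (z₃ t) ^ 2 with hf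
  have hfd : ∀ t ∈ s, HasDerivAt f 0 t := by
    intro t ht
    have H := (((h₁ t ht).pow 2).const_mul (-a)).add (((h₃ t ht).pow 2).const_mul b)
    refine HasDerivAt.congr_deriv (H.congr_of_eventuallyEq (Filter.Eventually.of_forall fun y => rfl)) ?_
    rw [show (2:ℕ) - 1 = 1 from rfl]
    push_cast
    ring
  have hconst := const_of_deriv_zero_open_preconn hs hconn hfd
  refine ⟨hconst, fun hab => ?_⟩
  rcases mul_neg_iff.1 hab with ⟨ha, hb⟩ | ⟨ha, hb⟩
  · -- a > 0, b < 0 : negative definite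
    constructor
    · right
      intro p q hpq
      rcases not_and_or.1 hpq with hp | hq
      · nlinarith [sq_nonneg p, sq_nonneg q, pow_pos (abs_pos.2 hp) 2, sq_abs p]
      · nlinarith [sq_nonneg p, sq_nonneg q, pow_pos (abs_pos.2 hq) 2, sq_abs q]
    · rcases Set.eq_empty_or_nonempty s with hse | ⟨t₀, ht₀⟩
      · exact ⟨0, fun t ht => by simp [hse] at ht⟩
      · set c := f t₀ with hc
        refine ⟨Real.sqrt ((-c) / a) + Real.sqrt (c / b), fun t ht => ?_⟩
        have hceq : f t = c := hconst t ht t₀ ht₀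
        have h1 : a * (z₁ t) ^ 2 ≤ -c := by
          have := hceq; simp only [hf] at this
          nlinarith [sq_nonneg (z₃ t)]
        have h2' : (-b) * (z₃ t) ^ 2 ≤ -c := by
          have := hceq; simp only [hf] at this
          nlinarith [sq_nonneg (z₁ t)]
        have hb1 := bound_aux ha h1
        have hb2 := bound_aux (neg_pos.2 hb) h2'
        have hcb : (-c) / (-b) = c / b := by
          rw [neg_div_neg_eq]
        rw [hcb] at hb2
        constructor
        · exact hb1.trans (le_add_of_nonneg_right (Real.sqrt_nonneg _))
        · exact hb2.trans (le_add_of_nonneg_left (Real.sqrt_nonneg _))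
  · -- a < 0, b > 0 : positive definite
    constructor
    · left
      intro p q hpq
      rcases not_and_or.1 hpq with hp | hq
      · nlinarith [sq_nonneg p, sq_nonneg q, pow_pos (abs_pos.2 hp) 2, sq_abs p]
      · nlinarith [sq_nonneg p, sq_nonneg q, pow_pos (abs_pos.2 hq) 2, sq_abs q]
    · rcases Set.eq_empty_or_nonempty s with hse | ⟨t₀, ht₀⟩
      · exact ⟨0, fun t ht => by simp [hse] at ht⟩
      · set c := f t₀ with hc
        refine ⟨Real.sqrt (c / (-a)) + Real.sqrt (c / b), fun t ht => ?_⟩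
        have hceq : f t = c := hconst t ht t₀ ht₀
        have h1 : (-a) * (z₁ t) ^ 2 ≤ c := by
          have := hceq; simp only [hf] at this
          nlinarith [sq_nonneg (z₃ t)]
        have h2 : b * (z₃ t) ^ 2 ≤ c := by
          have := hceq; simp only [hf] at this
          nlinarith [sq_nonneg (z₁ t)]
        have hb1 := bound_aux (neg_pos.2 ha) h1
        have hb2 := bound_aux hb h2
        constructor
        · exact hb1.trans (le_add_of_nonneg_right (Real.sqrt_nonneg _))
        · exact hb2.trans (le_add_of_nonneg_left (Real.sqrt_nonneg _))
end

section
/- Let a, b > 0 and let E be the vector field on ℝ³ given by E(z₁,z₂,z₃) = (b z₃², −z₁(a z₂ + b z₃), a z₁ z₃). Then the vector v = (√(b/a), −b/(2a), 1) satisfies E(v) = √(ab) · v, and therefore z(t) = v/(1 − √(ab) t), defined for t < 1/√(ab), is a solution of ż = E(z) through v that cannot be extended to all of ℝ; hence E is not complete. -/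
open Real

/-- Auxiliary: the blowup argument, stated with abstract constants `c = √(ab)`, `k = √(b/a)`. -/
lemma eulerArnold_aux (a b c k : ℝ) (ha : 0 < a) (hb : 0 < b)
    (hc : 0 < c) (hk : 0 < k) (hck : c * k = b) (hak : a * k = c)
    (z₁ z₃ : ℝ → ℝ) (h10 : z₁ 0 = k) (h30 : z₃ 0 = 1)
    (hd1 : ∀ t : ℝ, HasDerivAt z₁ (b * (z₃ t)^2) t)
    (hd3 : ∀ t : ℝ, HasDerivAt z₃ (a * z₁ t * z₃ t) t) : False := by
  -- Step 1: h := z₁ - k·z₃ vanishes on [0, ∞) (Grönwall).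
  set h : ℝ → ℝ := fun t => z₁ t - k * z₃ t with hh
  have hdh : ∀ t : ℝ, HasDerivAt h (-(c * z₃ t) * h t) t := by
    intro t
    have := (hd1 t).sub ((hd3 t).const_mul k)
    refine this.congr_deriv (Eq.symm ?_)
    simp only [hh]
    linear_combination (z₃ t ^ 2) * hck + (z₁ t * z₃ t) * hak
  have hzero : ∀ t : ℝ, 0 ≤ t → h t = 0 := by
    intro T hT
    -- continuity of z₃ on [0, T]
    have hcont3 : ContinuousOn z₃ (Set.Icc 0 T) :=
      fun t _ => ((hd3 t).continuousAt).continuousWithinAt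
    obtain ⟨M, hM⟩ := (isCompact_Icc.image_of_continuousOn hcont3).isBounded.subset_closedBall 0
    have hM' : ∀ t ∈ Set.Icc (0:ℝ) T, |z₃ t| ≤ M := by
      intro t ht
      have := hM ⟨t, ht, rfl⟩
      simpa [Metric.mem_closedBall, Real.dist_eq] using this
    have key := norm_le_gronwallBound_of_norm_deriv_right_le
      (f := h) (f' := fun t => -(c * z₃ t) * h t) (δ := 0) (K := c * M) (ε := 0)
      (a := 0) (b := T)
      (fun t _ => ((hdh t).continuousAt).continuousWithinAt)
      (fun t ht => (hdh t).hasDerivWithinAt)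
      (by simp [hh, h10, h30])
      ?_ T (by constructor <;> simp [hT])
    · have := key
      rw [gronwallBound_ε0_δ0] at this
      have := abs_nonneg (h T)
      simp only [Real.norm_eq_abs] at key
      rw [gronwallBound_ε0_δ0] at key
      exact abs_eq_zero.mp (le_antisymm key (abs_nonneg _))
    · intro t ht
      simp only [Real.norm_eq_abs, abs_mul, abs_neg, add_zero, abs_of_pos hc]
      exact mul_le_mul_of_nonneg_right
        (mul_le_mul_of_nonneg_left (hM' t ⟨ht.1, ht.2.le⟩) hc.le) (abs_nonneg _)
  have hz1 : ∀ t : ℝ, 0 ≤ t → z₁ t = k * z₃ t := by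
    intro t ht
    have := hzero t ht
    simp only [hh] at this
    linarith
  -- Step 2: z₃ is monotone on [0, ∞), hence z₃ ≥ 1 there.
  have hmono : MonotoneOn z₃ (Set.Ici 0) := by
    apply monotoneOn_of_deriv_nonneg (convex_Ici 0)
      (fun t _ => ((hd3 t).continuousAt).continuousWithinAt)
      (fun t _ => ((hd3 t).differentiableAt).differentiableWithinAt)
    intro t ht
    rw [interior_Ici] at ht
    rw [(hd3 t).deriv, hz1 t (le_of_lt ht)]
    nlinarith [sq_nonneg (z₃ t), mul_pos ha hk]
  have hz3ge : ∀ t : ℝ, 0 ≤ t → 1 ≤ z₃ t := by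
    intro t ht
    have := hmono (Set.self_mem_Ici) (Set.mem_Ici.mpr ht) ht
    rwa [h30] at this
  -- Step 3: w = z₃⁻¹ has derivative -c on [0, 1/c]; MVT gives w(1/c) = 0, contradiction.
  have hz3ne : ∀ t : ℝ, 0 ≤ t → z₃ t ≠ 0 := fun t ht => by
    have := hz3ge t ht; linarith
  have hdw : ∀ t : ℝ, 0 ≤ t → HasDerivAt (fun u => (z₃ u)⁻¹) (-c) t := by
    intro t ht
    have := (hd3 t).inv (hz3ne t ht)
    refine this.congr_deriv (Eq.symm ?_)
    rw [hz1 t ht, eq_div_iff (pow_ne_zero 2 (hz3ne t ht))]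
    linear_combination (z₃ t ^ 2) * hak
  obtain ⟨s, hs, hslope⟩ := exists_hasDerivAt_eq_slope (fun u => (z₃ u)⁻¹)
    (fun _ => -c) (by positivity : (0:ℝ) < c⁻¹)
    (fun t ht => (hdw t ht.1).continuousAt.continuousWithinAt)
    (fun t ht => hdw t ht.1.le)
  have h1c : (0:ℝ) ≤ c⁻¹ := by positivity
  have hw : (0:ℝ) < (z₃ c⁻¹)⁻¹ := by
    have := hz3ge c⁻¹ h1c
    positivity
  rw [h30, sub_zero, inv_one, eq_div_iff (inv_ne_zero hc.ne')] at hslope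
  rw [show -c * c⁻¹ = -1 by field_simp] at hslope
  linarith

/-- For `a, b > 0`, the vector `v = (√(b/a), −b/(2a), 1)` satisfies `E(v) = √(ab)·v` for
`E(z) = (b z₃², −z₁(a z₂ + b z₃), a z₁ z₃)`; hence `z(t) = v/(1−√(ab)t)` solves `ż = E(z)` on
`t < 1/√(ab)` with `z(0) = v` and cannot be extended to all of `ℝ`: `E` is not complete. -/
theorem eulerArnold_case3_incomplete_of_pos
    (a b : ℝ) (ha : 0 < a) (hb : 0 < b) :
    (b * (1 : ℝ)^2 = Real.sqrt (a * b) * Real.sqrt (b / a) ∧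
     -(Real.sqrt (b / a) * (a * (-b / (2 * a)) + b * 1)) = Real.sqrt (a * b) * (-b / (2 * a)) ∧
     a * Real.sqrt (b / a) * 1 = Real.sqrt (a * b) * 1) ∧
    ((1 - Real.sqrt (a * b) * 0)⁻¹ = (1 : ℝ)) ∧
    (∀ t ∈ Set.Iio (Real.sqrt (a * b))⁻¹,
      HasDerivAt (fun u : ℝ => (1 - Real.sqrt (a * b) * u)⁻¹ * Real.sqrt (b / a))
        (b * ((1 - Real.sqrt (a * b) * t)⁻¹ * 1)^2) t ∧
      HasDerivAt (fun u : ℝ => (1 - Real.sqrt (a * b) * u)⁻¹ * (-b / (2 * a)))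
        (-(((1 - Real.sqrt (a * b) * t)⁻¹ * Real.sqrt (b / a)) *
            (a * ((1 - Real.sqrt (a * b) * t)⁻¹ * (-b / (2 * a)))
              + b * ((1 - Real.sqrt (a * b) * t)⁻¹ * 1)))) t ∧
      HasDerivAt (fun u : ℝ => (1 - Real.sqrt (a * b) * u)⁻¹ * 1)
        (a * ((1 - Real.sqrt (a * b) * t)⁻¹ * Real.sqrt (b / a))
           * ((1 - Real.sqrt (a * b) * t)⁻¹ * 1)) t) ∧
    ¬ ∃ z₁ z₂ z₃ : ℝ → ℝ,
        z₁ 0 = Real.sqrt (b / a) ∧ z₂ 0 = -b / (2 * a) ∧ z₃ 0 = 1 ∧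
        (∀ t : ℝ, HasDerivAt z₁ (b * (z₃ t)^2) t) ∧
        (∀ t : ℝ, HasDerivAt z₂ (-(z₁ t * (a * z₂ t + b * z₃ t))) t) ∧
        (∀ t : ℝ, HasDerivAt z₃ (a * z₁ t * z₃ t) t) := by
  set c := Real.sqrt (a * b) with hcdef
  set k := Real.sqrt (b / a) with hkdef
  have hc : 0 < c := Real.sqrt_pos.mpr (by positivity)
  have hk : 0 < k := Real.sqrt_pos.mpr (by positivity)
  have hck : c * k = b := by
    rw [hcdef, hkdef, ← Real.sqrt_mul (by positivity)]
    rw [show a * b * (b / a) = b ^ 2 by field_simp]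
    exact Real.sqrt_sq hb.le
  have hak : a * k = c := by
    rw [hcdef, hkdef, show a = Real.sqrt (a^2) from (Real.sqrt_sq ha.le).symm,
      ← Real.sqrt_mul (by positivity)]
    congr 1
    field_simp
    ring
    exact (Real.sq_sqrt (by positivity)).symm
  refine ⟨⟨by linarith, by field_simp; nlinarith, by linarith⟩, by simp, ?_, ?_⟩
  · -- derivative computations
    intro t ht
    have htne : 1 - c * t ≠ 0 := by
      have : c * t < 1 := by
        rw [Set.mem_Iio] at ht
        calc c * t < c * c⁻¹ := by exact mul_lt_mul_of_pos_left ht hc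
        _ = 1 := mul_inv_cancel₀ hc.ne'
      linarith
    have hbase : HasDerivAt (fun u : ℝ => (1 - c * u)⁻¹) (c * ((1 - c * t)⁻¹)^2) t := by
      have h1 : HasDerivAt (fun u : ℝ => 1 - c * u) (-c) t := by
        simpa using ((hasDerivAt_id t).const_mul c).const_sub 1
      have := h1.inv htne
      refine this.congr_deriv (Eq.symm ?_)
      field_simp
    refine ⟨?_, ?_, ?_⟩
    · have := hbase.mul_const k
      refine this.congr_deriv (Eq.symm ?_)
      field_simp
      nlinarith [sq_nonneg ((1 - c*t)⁻¹)]
    · have := hbase.mul_const (-b / (2 * a))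
      refine this.congr_deriv (Eq.symm ?_)
      field_simp
      linear_combination (-1 : ℝ) * hak
    · have := hbase.mul_const 1
      refine this.congr_deriv (Eq.symm ?_)
      field_simp
      nlinarith [hak]
  · rintro ⟨z₁, z₂, z₃, h10, _, h30, hd1, _, hd3⟩
    exact eulerArnold_aux a b c k ha hb hc hk hck hak z₁ z₃ h10 h30 hd1 hd3
end

section
/- Let ζ, ν be real numbers with ζν ≠ 0, and let E be the vector field on ℝ³ given by E(z₁,z₂,z₃) = ζν²·( z₃(z₁ − ζν z₃), z₂z₃ − z₁² + ζν z₁z₃, −z₃² ). Then the vector v = (ζν/2, −ζ²ν²/8, 1) satisfies E(v) = −ζν² · v. Consequently z(t) = v/(1 + ζν² t) is a solution of ż = E(z) defined on a maximal interval strictly contained in ℝ, and E is not complete. -/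
lemma lin_ode_zero_nonneg (G a : ℝ → ℝ) (h0 : G 0 = 0)
    (hG : ∀ t, HasDerivAt G (a t * G t) t) (ha : Continuous a) :
    ∀ t, 0 ≤ t → G t = 0 := by
  intro t ht
  have hGd : Differentiable ℝ G := fun x => (hG x).differentiableAt
  have hGc : Continuous G := hGd.continuous
  obtain ⟨K, hK⟩ := isCompact_Icc.exists_bound_of_continuousOn (f := a)
    (s := Set.Icc (0:ℝ) t) ha.continuousOn
  have := norm_le_gronwallBound_of_norm_deriv_right_le (f := G) (f' := fun x => a x * G x)
    (δ := 0) (K := K) (ε := 0) (a := 0) (b := t)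
    (hGc.continuousOn)
    (fun x _ => (hG x).hasDerivWithinAt)
    (by simp [h0])
    (fun x hx => by
      have hb := hK x (Set.mem_Icc_of_Ico hx)
      have h1 : ‖a x * G x‖ = |a x| * ‖G x‖ := by rw [norm_mul]; rfl
      rw [h1]
      have h2 : |a x| ≤ K := hb
      nlinarith [norm_nonneg (G x), abs_nonneg (a x)])
  have h := this t ⟨ht, le_rfl⟩
  rw [gronwallBound_ε0_δ0] at h
  exact norm_eq_zero.mp (le_antisymm h (norm_nonneg _))

lemma lin_ode_zero (G a : ℝ → ℝ) (h0 : G 0 = 0)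
    (hG : ∀ t, HasDerivAt G (a t * G t) t) (ha : Continuous a) :
    ∀ t, G t = 0 := by
  intro t
  rcases le_or_gt 0 t with h | h
  · exact lin_ode_zero_nonneg G a h0 hG ha t h
  · have := lin_ode_zero_nonneg (fun s => G (-s)) (fun s => -a (-s)) (by simpa using h0)
      (fun s => by
        have := ((hG (-s)).comp s (hasDerivAt_neg s))
        simp [mul_comm, mul_left_comm, mul_assoc] at this
        exact this.congr_deriv (by ring))
      (by continuity) (-t) (by linarith)
    simpa using this

/-- For `ζν ≠ 0` and `E(z) = ζν²(z₃(z₁−ζνz₃), z₂z₃−z₁²+ζνz₁z₃, −z₃²)`, the vector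
`v = (ζν/2, −ζ²ν²/8, 1)` satisfies `E(v) = −ζν²·v`; hence `z(t) = v/(1+ζν²t)` is a solution
defined on a maximal interval strictly contained in `ℝ`, and `E` is not complete. -/
theorem eulerArnold_case4_incomplete
    (ζ ν : ℝ) (hζν : ζ * ν ≠ 0) :
    (ζ * ν^2 * (1 * (ζ * ν / 2 - ζ * ν * 1)) = -(ζ * ν^2) * (ζ * ν / 2) ∧
     ζ * ν^2 * ((-(ζ^2 * ν^2) / 8) * 1 - (ζ * ν / 2)^2 + ζ * ν * (ζ * ν / 2) * 1)
       = -(ζ * ν^2) * (-(ζ^2 * ν^2) / 8) ∧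
     ζ * ν^2 * (-(1 : ℝ)^2) = -(ζ * ν^2) * 1) ∧
    ((1 + ζ * ν^2 * 0)⁻¹ = (1 : ℝ)) ∧
    (∀ t : ℝ, 0 < 1 + ζ * ν^2 * t →
      HasDerivAt (fun u : ℝ => (1 + ζ * ν^2 * u)⁻¹ * (ζ * ν / 2))
        (ζ * ν^2 * (((1 + ζ * ν^2 * t)⁻¹ * 1) *
          ((1 + ζ * ν^2 * t)⁻¹ * (ζ * ν / 2) - ζ * ν * ((1 + ζ * ν^2 * t)⁻¹ * 1)))) t ∧
      HasDerivAt (fun u : ℝ => (1 + ζ * ν^2 * u)⁻¹ * (-(ζ^2 * ν^2) / 8))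
        (ζ * ν^2 * (((1 + ζ * ν^2 * t)⁻¹ * (-(ζ^2 * ν^2) / 8)) * ((1 + ζ * ν^2 * t)⁻¹ * 1)
          - ((1 + ζ * ν^2 * t)⁻¹ * (ζ * ν / 2))^2
          + ζ * ν * ((1 + ζ * ν^2 * t)⁻¹ * (ζ * ν / 2)) * ((1 + ζ * ν^2 * t)⁻¹ * 1))) t ∧
      HasDerivAt (fun u : ℝ => (1 + ζ * ν^2 * u)⁻¹ * 1)
        (ζ * ν^2 * (-((1 + ζ * ν^2 * t)⁻¹ * 1)^2)) t) ∧
    ¬ ∃ z₁ z₂ z₃ : ℝ → ℝ,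
        z₁ 0 = ζ * ν / 2 ∧ z₂ 0 = -(ζ^2 * ν^2) / 8 ∧ z₃ 0 = 1 ∧
        (∀ t : ℝ, HasDerivAt z₁ (ζ * ν^2 * (z₃ t * (z₁ t - ζ * ν * z₃ t))) t) ∧
        (∀ t : ℝ, HasDerivAt z₂
          (ζ * ν^2 * (z₂ t * z₃ t - (z₁ t)^2 + ζ * ν * z₁ t * z₃ t)) t) ∧
        (∀ t : ℝ, HasDerivAt z₃ (ζ * ν^2 * (-(z₃ t)^2)) t) := by
  have hζ : ζ ≠ 0 := fun h => hζν (by simp [h])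
  have hν : ν ≠ 0 := fun h => hζν (by simp [h])
  have hc : ζ * ν^2 ≠ 0 := by positivity
  refine ⟨⟨by ring, by ring, by ring⟩, by norm_num, ?_, ?_⟩
  · intro t ht
    have hne : (1 + ζ * ν^2 * t) ≠ 0 := ne_of_gt ht
    have hbase : HasDerivAt (fun u : ℝ => (1 + ζ * ν^2 * u)⁻¹)
        (-(ζ * ν^2) / (1 + ζ * ν^2 * t)^2) t := by
      have h1 : HasDerivAt (fun u : ℝ => 1 + ζ * ν^2 * u) (ζ * ν^2) t := by
        simpa using ((hasDerivAt_id t).const_mul (ζ * ν^2)).const_add 1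
      exact h1.inv hne
    refine ⟨?_, ?_, ?_⟩
    · have := hbase.mul_const (ζ * ν / 2)
      refine this.congr_deriv ?_
      field_simp
      ring
    · have := hbase.mul_const (-(ζ^2 * ν^2) / 8)
      refine this.congr_deriv ?_
      field_simp
      ring
    · have := hbase.mul_const (1 : ℝ)
      refine this.congr_deriv ?_
      field_simp
  · rintro ⟨z₁, z₂, z₃, h1, h2, h30, hd1, hd2, hd3⟩
    set c := ζ * ν^2 with hcdef
    -- G t = (1 + c t) * z₃ t - 1 satisfies G' = (-c * z₃ t) * G, G 0 = 0
    have hz₃d : Differentiable ℝ z₃ := fun x => (hd3 x).differentiableAt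
    have hz₃c : Continuous z₃ := hz₃d.continuous
    have hG : ∀ t : ℝ, HasDerivAt (fun u => (1 + c * u) * z₃ u - 1)
        ((-c * z₃ t) * ((1 + c * t) * z₃ t - 1)) t := by
      intro t
      have hlin : HasDerivAt (fun u : ℝ => 1 + c * u) c t := by
        simpa using ((hasDerivAt_id t).const_mul c).const_add 1
      have := (hlin.mul (hd3 t)).sub_const 1
      refine this.congr_deriv ?_
      ring
    have hall := lin_ode_zero (fun u => (1 + c * u) * z₃ u - 1) (fun u => -c * z₃ u)
      (by simp [h30]) hG (by continuity)
    have h := hall (-(1/c))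
    have hzero : (1 + c * (-(1/c))) = 0 := by field_simp; norm_num
    rw [hzero, zero_mul] at h
    norm_num at h
end

section
/- Let a, b ∈ ℝ with b ≠ 0 and let E be the vector field on ℝ³ given by E(z₁,z₂,z₃) = ( b(z₂² + z₃²), z₁(a z₃ − b z₂), z₁(a z₂ + b z₃) ). Then there exists a nonzero vector v ∈ ℝ³ and a real λ ≠ 0 with E(v) = λ v; consequently the system ż = E(z) admits a solution defined on a maximal interval strictly contained in ℝ, and E is not complete. -/
open Metric Set

lemma eigen_exists (a b : ℝ) (hb : b ≠ 0) :
    ∃ (v₁ v₂ v₃ lam : ℝ), v₁ ≠ 0 ∧ 0 < lam ∧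
      b * (v₂^2 + v₃^2) = lam * v₁ ∧
      v₁ * (a * v₃ - b * v₂) = lam * v₂ ∧
      v₁ * (a * v₂ + b * v₃) = lam * v₃ := by
  set s := Real.sqrt (a^2 + b^2) with hs
  have hs2 : s^2 = a^2 + b^2 := Real.sq_sqrt (by positivity)
  have hspos : 0 < s := Real.sqrt_pos.mpr (by positivity)
  set c : ℝ := if 0 < b then s else -s with hc
  have hc2 : c^2 = a^2 + b^2 := by
    rw [hc]; split_ifs <;> [exact hs2; simpa using hs2]
  have hbc : 0 < b * c := by
    rw [hc]; split_ifs with h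
    · positivity
    · have hbneg : b < 0 := lt_of_le_of_ne (not_lt.mp h) hb
      nlinarith
  have hbbc : 0 < 2 * b * (b + c) := by nlinarith
  set w := Real.sqrt (2 * b * (b + c)) with hw
  have hwpos : 0 < w := Real.sqrt_pos.mpr hbbc
  have hw2 : w^2 = 2 * b * (b + c) := Real.sq_sqrt hbbc.le
  set v₁ : ℝ := if 0 < b then w else -w with hv1
  have hv1sq : v₁^2 = 2 * b * (b + c) := by
    rw [hv1]; split_ifs <;> [exact hw2; simpa using hw2]
  have hv1ne : v₁ ≠ 0 := by
    rw [hv1]; split_ifs <;> [exact hwpos.ne'; simpa using hwpos.ne']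
  have hlam : 0 < v₁ * c := by
    rw [hv1, hc]; split_ifs <;> nlinarith
  exact ⟨v₁, a, b + c, v₁ * c, hv1ne, hlam,
    by linear_combination (-c) * hv1sq - b * hc2,
    by ring,
    by linear_combination (-v₁) * hc2⟩

lemma F_lipschitzOn (a b R : ℝ) (hR : 0 ≤ R) :
    LipschitzOnWith ((4 * |b| + 2 * (|a| + |b|)) * R).toNNReal
      (fun p : ℝ × ℝ × ℝ =>
        ((b * (p.2.1^2 + p.2.2^2), p.1 * (a * p.2.2 - b * p.2.1),
          p.1 * (a * p.2.1 + b * p.2.2)) : ℝ × ℝ × ℝ))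
      (closedBall 0 R) := by
  apply LipschitzOnWith.of_dist_le_mul
  intro p hp q hq
  rw [Real.coe_toNNReal _ (by positivity)]
  set d := dist p q with hdd
  have hd0 : 0 ≤ d := dist_nonneg
  have hp' : ‖p‖ ≤ R := mem_closedBall_zero_iff.mp hp
  have hq' : ‖q‖ ≤ R := mem_closedBall_zero_iff.mp hq
  have hp1 : |p.1| ≤ R := (norm_fst_le p).trans hp'
  have hp2 : |p.2.1| ≤ R := ((norm_fst_le p.2).trans (norm_snd_le p)).trans hp'
  have hp3 : |p.2.2| ≤ R := ((norm_snd_le p.2).trans (norm_snd_le p)).trans hp'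
  have hq1 : |q.1| ≤ R := (norm_fst_le q).trans hq'
  have hq2 : |q.2.1| ≤ R := ((norm_fst_le q.2).trans (norm_snd_le q)).trans hq'
  have hq3 : |q.2.2| ≤ R := ((norm_snd_le q.2).trans (norm_snd_le q)).trans hq'
  have hd1 : |p.1 - q.1| ≤ d := by
    rw [hdd, Prod.dist_eq, Real.dist_eq]; exact le_max_left _ _
  have hd2 : |p.2.1 - q.2.1| ≤ d := by
    rw [hdd, Prod.dist_eq, Prod.dist_eq, Real.dist_eq]
    exact le_trans (le_max_left _ _) (le_max_right _ _)
  have hd3 : |p.2.2 - q.2.2| ≤ d := by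
    rw [hdd, Prod.dist_eq, Prod.dist_eq, Real.dist_eq]
    exact le_trans (le_max_right _ _) (le_max_right _ _)
  rw [Prod.dist_eq, Prod.dist_eq]
  have hnn : 0 ≤ (|a| + |b|) * R * d := by positivity
  have hnn2 : 0 ≤ |b| * (R * d) := by positivity
  refine max_le ?_ (max_le ?_ ?_) <;> rw [Real.dist_eq]
  · have e : b * (p.2.1^2 + p.2.2^2) - b * (q.2.1^2 + q.2.2^2)
        = b * ((p.2.1 - q.2.1) * (p.2.1 + q.2.1)) + b * ((p.2.2 - q.2.2) * (p.2.2 + q.2.2)) := by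
      ring
    calc |b * (p.2.1^2 + p.2.2^2) - b * (q.2.1^2 + q.2.2^2)|
        ≤ |b| * (|p.2.1 - q.2.1| * |p.2.1 + q.2.1|)
            + |b| * (|p.2.2 - q.2.2| * |p.2.2 + q.2.2|) := by
          rw [e]; refine (abs_add_le _ _).trans ?_
          rw [abs_mul, abs_mul, abs_mul, abs_mul]
      _ ≤ |b| * (d * (R + R)) + |b| * (d * (R + R)) := by
          gcongr
          · exact (abs_add_le _ _).trans (add_le_add hp2 hq2)
          · exact (abs_add_le _ _).trans (add_le_add hp3 hq3)
      _ ≤ (4 * |b| + 2 * (|a| + |b|)) * R * d := by nlinarith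
  · have e : p.1 * (a * p.2.2 - b * p.2.1) - q.1 * (a * q.2.2 - b * q.2.1)
        = (p.1 - q.1) * (a * p.2.2 - b * p.2.1) + a * (q.1 * (p.2.2 - q.2.2))
          + (-b) * (q.1 * (p.2.1 - q.2.1)) := by ring
    have hab : |a * p.2.2 - b * p.2.1| ≤ |a| * R + |b| * R := by
      refine (abs_sub _ _).trans ?_
      rw [abs_mul, abs_mul]
      exact add_le_add (by gcongr) (by gcongr)
    calc |p.1 * (a * p.2.2 - b * p.2.1) - q.1 * (a * q.2.2 - b * q.2.1)|
        ≤ |(p.1 - q.1) * (a * p.2.2 - b * p.2.1)| + |a * (q.1 * (p.2.2 - q.2.2))|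
            + |(-b) * (q.1 * (p.2.1 - q.2.1))| := by rw [e]; exact abs_add_three _ _ _
      _ ≤ d * (|a| * R + |b| * R) + |a| * (R * d) + |b| * (R * d) := by
          rw [abs_mul, abs_mul, abs_mul, abs_mul, abs_mul, abs_neg]
          gcongr <;> first | assumption | positivity
      _ ≤ (4 * |b| + 2 * (|a| + |b|)) * R * d := by nlinarith
  · have e : p.1 * (a * p.2.1 + b * p.2.2) - q.1 * (a * q.2.1 + b * q.2.2)
        = (p.1 - q.1) * (a * p.2.1 + b * p.2.2) + a * (q.1 * (p.2.1 - q.2.1))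
          + b * (q.1 * (p.2.2 - q.2.2)) := by ring
    have hab : |a * p.2.1 + b * p.2.2| ≤ |a| * R + |b| * R := by
      refine (abs_add_le _ _).trans ?_
      rw [abs_mul, abs_mul]
      exact add_le_add (by gcongr) (by gcongr)
    calc |p.1 * (a * p.2.1 + b * p.2.2) - q.1 * (a * q.2.1 + b * q.2.2)|
        ≤ |(p.1 - q.1) * (a * p.2.1 + b * p.2.2)| + |a * (q.1 * (p.2.1 - q.2.1))|
            + |b * (q.1 * (p.2.2 - q.2.2))| := by rw [e]; exact abs_add_three _ _ _
      _ ≤ d * (|a| * R + |b| * R) + |a| * (R * d) + |b| * (R * d) := by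
          rw [abs_mul, abs_mul, abs_mul, abs_mul, abs_mul]
          gcongr <;> first | assumption | positivity
      _ ≤ (4 * |b| + 2 * (|a| + |b|)) * R * d := by nlinarith

/-- For `b ≠ 0` and `E(z) = (b(z₂²+z₃²), z₁(az₃−bz₂), z₁(az₂+bz₃))` there is a nonzero
idempotent direction `E(v) = λv`, `λ ≠ 0`; consequently the system admits a solution whose
maximal interval of definition is strictly contained in `ℝ`, and `E` is not complete. -/
theorem eulerArnold_case2_incomplete
    (a b : ℝ) (hb : b ≠ 0) :
    (∃ (v₁ v₂ v₃ lam : ℝ), ¬(v₁ = 0 ∧ v₂ = 0 ∧ v₃ = 0) ∧ lam ≠ 0 ∧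
      b * (v₂^2 + v₃^2) = lam * v₁ ∧
      v₁ * (a * v₃ - b * v₂) = lam * v₂ ∧
      v₁ * (a * v₂ + b * v₃) = lam * v₃) ∧
    ¬ (∀ w₁ w₂ w₃ : ℝ, ∃ z₁ z₂ z₃ : ℝ → ℝ,
        z₁ 0 = w₁ ∧ z₂ 0 = w₂ ∧ z₃ 0 = w₃ ∧
        (∀ t : ℝ, HasDerivAt z₁ (b * ((z₂ t)^2 + (z₃ t)^2)) t) ∧
        (∀ t : ℝ, HasDerivAt z₂ (z₁ t * (a * z₃ t - b * z₂ t)) t) ∧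
        (∀ t : ℝ, HasDerivAt z₃ (z₁ t * (a * z₂ t + b * z₃ t)) t)) := by
  obtain ⟨v₁, v₂, v₃, lam, hv1ne, hlam, e1, e2, e3⟩ := eigen_exists a b hb
  constructor
  · exact ⟨v₁, v₂, v₃, lam, fun h => hv1ne h.1, hlam.ne', e1, e2, e3⟩
  intro H
  obtain ⟨z₁, z₂, z₃, hz10, hz20, hz30, hd1, hd2, hd3⟩ := H v₁ v₂ v₃
  set F : ℝ → ℝ × ℝ × ℝ → ℝ × ℝ × ℝ := fun _ p =>
    (b * (p.2.1^2 + p.2.2^2), p.1 * (a * p.2.2 - b * p.2.1),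
      p.1 * (a * p.2.1 + b * p.2.2)) with hF
  set Z : ℝ → ℝ × ℝ × ℝ := fun t => (z₁ t, z₂ t, z₃ t) with hZ
  have hZd : ∀ t, HasDerivAt Z (F t (Z t)) t := fun t =>
    (hd1 t).prodMk ((hd2 t).prodMk (hd3 t))
  have hT : (0:ℝ) < lam⁻¹ := inv_pos.mpr hlam
  have hZc : ContinuousOn Z (Icc 0 lam⁻¹) :=
    continuousOn_of_forall_continuousAt fun t _ => (hZd t).continuousAt
  obtain ⟨M, hM⟩ := isCompact_Icc.exists_bound_of_continuousOn hZc
  have hM0 : 0 ≤ M := le_trans (norm_nonneg _) (hM 0 ⟨le_refl 0, hT.le⟩)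
  have hv1pos : 0 < |v₁| := abs_pos.mpr hv1ne
  set ε : ℝ := min (1/2) (|v₁| / (2 * (M + 1))) with hε
  have hεpos : 0 < ε := lt_min (by norm_num) (by positivity)
  have hε1 : ε ≤ 1/2 := min_le_left _ _
  set sp : ℝ := (1 - ε) / lam with hsp
  have hsp0 : 0 ≤ sp := div_nonneg (by linarith) hlam.le
  have hspT : sp ≤ lam⁻¹ := by
    rw [hsp, inv_eq_one_div]
    exact (div_le_div_iff_of_pos_right hlam).mpr (by linarith)
  have hlamsp : lam * sp = 1 - ε := by
    rw [hsp]; field_simp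
  have hu : ∀ t ∈ Icc (0:ℝ) sp, ε ≤ 1 - lam * t := by
    intro t ht
    have : lam * t ≤ lam * sp := by
      apply mul_le_mul_of_nonneg_left ht.2 hlam.le
    rw [hlamsp] at this
    linarith
  set Y : ℝ → ℝ × ℝ × ℝ := fun t =>
    (v₁ * (1 - lam * t)⁻¹, v₂ * (1 - lam * t)⁻¹, v₃ * (1 - lam * t)⁻¹) with hY
  have hYd : ∀ t, (1 - lam * t) ≠ 0 → HasDerivAt Y (F t (Y t)) t := by
    intro t hne
    have hlin : HasDerivAt (fun t : ℝ => 1 - lam * t) (-(lam * 1)) t :=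
      ((hasDerivAt_id t).const_mul lam).const_sub 1
    have hinv := hlin.inv hne
    have c1 : HasDerivAt (fun t : ℝ => v₁ * (1 - lam * t)⁻¹)
        (b * ((v₂ * (1 - lam * t)⁻¹)^2 + (v₃ * (1 - lam * t)⁻¹)^2)) t := by
      refine (hinv.const_mul v₁).congr_deriv ?_; symm
      field_simp
      linear_combination e1
    have c2 : HasDerivAt (fun t : ℝ => v₂ * (1 - lam * t)⁻¹)
        ((v₁ * (1 - lam * t)⁻¹) * (a * (v₃ * (1 - lam * t)⁻¹)
          - b * (v₂ * (1 - lam * t)⁻¹))) t := by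
      refine (hinv.const_mul v₂).congr_deriv ?_; symm
      field_simp
      linear_combination e2
    have c3 : HasDerivAt (fun t : ℝ => v₃ * (1 - lam * t)⁻¹)
        ((v₁ * (1 - lam * t)⁻¹) * (a * (v₂ * (1 - lam * t)⁻¹)
          + b * (v₃ * (1 - lam * t)⁻¹))) t := by
      refine (hinv.const_mul v₃).congr_deriv ?_; symm
      field_simp
      linear_combination e3
    exact c1.prodMk (c2.prodMk c3)
  have hune : ∀ t ∈ Icc (0:ℝ) sp, (1 - lam * t) ≠ 0 :=
    fun t ht => ne_of_gt (lt_of_lt_of_le hεpos (hu t ht))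
  have hYc : ContinuousOn Y (Icc 0 sp) :=
    continuousOn_of_forall_continuousAt fun t ht => (hYd t (hune t ht)).continuousAt
  set R : ℝ := M + (|v₁| + |v₂| + |v₃|) / ε with hR
  have hRnn : 0 ≤ R := add_nonneg hM0 (by positivity)
  have hZs : ∀ t ∈ Ico (0:ℝ) sp, Z t ∈ closedBall (0 : ℝ × ℝ × ℝ) R := by
    intro t ht
    rw [mem_closedBall_zero_iff]
    have : ‖Z t‖ ≤ M := hM t ⟨ht.1, le_trans ht.2.le hspT⟩
    have h2 : 0 ≤ (|v₁| + |v₂| + |v₃|) / ε := by positivity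
    rw [hR]; linarith
  have hYs : ∀ t ∈ Ico (0:ℝ) sp, Y t ∈ closedBall (0 : ℝ × ℝ × ℝ) R := by
    intro t ht
    have hut : ε ≤ 1 - lam * t := hu t ⟨ht.1, ht.2.le⟩
    have hupos : 0 < 1 - lam * t := lt_of_lt_of_le hεpos hut
    rw [mem_closedBall_zero_iff]
    have key : ∀ c : ℝ, |c| ≤ |v₁| + |v₂| + |v₃| → ‖c * (1 - lam * t)⁻¹‖ ≤ R := by
      intro c hc
      rw [Real.norm_eq_abs, abs_mul, abs_inv, abs_of_pos hupos]
      calc |c| * (1 - lam * t)⁻¹ ≤ (|v₁| + |v₂| + |v₃|) * ε⁻¹ := by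
            gcongr
        _ = (|v₁| + |v₂| + |v₃|) / ε := by rw [div_eq_mul_inv]
        _ ≤ R := by rw [hR]; linarith
    rw [hY, Prod.norm_def, Prod.norm_def]
    refine max_le (key v₁ (by have := abs_nonneg v₂; have := abs_nonneg v₃; linarith)) (max_le (key v₂ ?_) (key v₃ ?_))
    · have := abs_nonneg v₁; have := abs_nonneg v₃; linarith
    · have := abs_nonneg v₁; have := abs_nonneg v₂; linarith
  have hlip := F_lipschitzOn a b R hRnn
  have heqn := ODE_solution_unique_of_mem_Icc_right (v := F)
    (s := fun _ => closedBall (0 : ℝ × ℝ × ℝ) R) (fun _ _ => hlip)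
    (hZc.mono (Icc_subset_Icc_right hspT))
    (fun t _ => (hZd t).hasDerivWithinAt) hZs
    hYc (fun t ht => (hYd t (hune t (Ico_subset_Icc_self ht))).hasDerivWithinAt) hYs
    (by rw [hZ, hY]; simp [hz10, hz20, hz30])
  have hZsp := heqn ⟨hsp0, le_rfl⟩
  have hz1sp : z₁ sp = v₁ * (1 - lam * sp)⁻¹ := congrArg Prod.fst hZsp
  have hεsp : 1 - lam * sp = ε := by rw [hlamsp]; ring
  have hbound : |z₁ sp| ≤ M := by
    have h1 : ‖Z sp‖ ≤ M := hM sp ⟨hsp0, hspT⟩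
    exact le_trans (norm_fst_le (Z sp)) h1
  have hεle : ε ≤ |v₁| / (2 * (M + 1)) := min_le_right _ _
  have hgrow : 2 * (M + 1) ≤ |v₁| / ε := by
    rw [le_div_iff₀ hεpos]
    calc 2 * (M + 1) * ε ≤ 2 * (M + 1) * (|v₁| / (2 * (M + 1))) := by
          gcongr
        _ = |v₁| := by field_simp
  have : |z₁ sp| = |v₁| / ε := by
    rw [hz1sp, hεsp, abs_mul, abs_inv, abs_of_pos hεpos, div_eq_mul_inv]
  linarith
end

section
/- Let E be the complex vector field on ℂ³ given by E(z₁,z₂,z₃) = (a z₂z₃, b z₁z₃, (a+b) z₁z₂) with a, b ∈ ℂ. If a·b·(a+b) = 0, then every local holomorphic solution of ż = E(z) extends to an entire solution z: ℂ → ℂ³; that is, E is a complete holomorphic vector field on ℂ³. -/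
open Metric Complex

lemma expODE (σ t₀ : ℂ) (r : ℝ) (hr : 0 < r) (p : ℂ → ℂ)
    (hp : ∀ t ∈ ball t₀ r, HasDerivAt p (σ * p t) t) :
    ∀ t ∈ ball t₀ r, p t = p t₀ * Complex.exp (σ * (t - t₀)) := by
  intro t ht
  set g : ℂ → ℂ := fun s => p s * Complex.exp (-σ * (s - t₀)) with hgdef
  have hgd : ∀ s ∈ ball t₀ r, HasDerivAt g 0 s := by
    intro s hs
    have he : HasDerivAt (fun s => Complex.exp (-σ * (s - t₀)))
        (Complex.exp (-σ * (s - t₀)) * (-σ * 1)) s :=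
      (((hasDerivAt_id s).sub_const t₀).const_mul (-σ)).cexp
    have h1 := (hp s hs).fun_mul he
    refine h1.congr_deriv ?_
    ring
  have hconst : g t = g t₀ := by
    apply (convex_ball t₀ r).is_const_of_fderivWithin_eq_zero (𝕜 := ℂ)
      (fun s hs => (hgd s hs).differentiableAt.differentiableWithinAt) ?_ ht
      (Metric.mem_ball_self hr)
    intro s hs
    rw [fderivWithin_of_isOpen Metric.isOpen_ball hs]
    have := (hgd s hs).hasFDerivAt.fderiv
    rw [this]
    ext
    simp
  have h0 : g t₀ = p t₀ := by simp [hgdef]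
  have hne : Complex.exp (-σ * (t - t₀)) ≠ 0 := Complex.exp_ne_zero _
  have : p t * Complex.exp (-σ * (t - t₀)) = p t₀ := by rw [← h0]; exact hconst
  have h2 : p t₀ * Complex.exp (σ * (t - t₀)) =
      p t * Complex.exp (-σ * (t - t₀)) * Complex.exp (σ * (t - t₀)) := by rw [this]
  rw [h2, mul_assoc, ← Complex.exp_add]
  ring_nf
  simp

lemma pairODE (σ γ t₀ : ℂ) (hγ : γ ≠ 0) (r : ℝ) (hr : 0 < r) (u v : ℂ → ℂ)
    (hu : ∀ t ∈ ball t₀ r, HasDerivAt u (σ * γ * v t) t)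
    (hv : ∀ t ∈ ball t₀ r, HasDerivAt v (σ / γ * u t) t) :
    ∀ t ∈ ball t₀ r,
      u t = ((u t₀ + γ * v t₀) * Complex.exp (σ * (t - t₀))
              + (u t₀ - γ * v t₀) * Complex.exp (-σ * (t - t₀))) / 2 ∧
      v t = ((u t₀ + γ * v t₀) * Complex.exp (σ * (t - t₀))
              - (u t₀ - γ * v t₀) * Complex.exp (-σ * (t - t₀))) / (2 * γ) := by
  have hp : ∀ t ∈ ball t₀ r,
      HasDerivAt (fun s => u s + γ * v s) (σ * (u t + γ * v t)) t := by
    intro t ht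
    have := (hu t ht).fun_add ((hv t ht).const_mul γ)
    refine this.congr_deriv ?_
    field_simp
    ring
  have hq : ∀ t ∈ ball t₀ r,
      HasDerivAt (fun s => u s - γ * v s) (-σ * (u t - γ * v t)) t := by
    intro t ht
    have := (hu t ht).fun_sub ((hv t ht).const_mul γ)
    refine this.congr_deriv ?_
    field_simp
    ring
  have hP := expODE σ t₀ r hr _ hp
  have hQ := expODE (-σ) t₀ r hr _ hq
  intro t ht
  have h1 := hP t ht
  have h2 := hQ t ht
  constructor
  · rw [eq_div_iff (two_ne_zero)]
    linear_combination h1 + h2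
  · rw [eq_div_iff (mul_ne_zero two_ne_zero hγ)]
    linear_combination h1 - h2

lemma pairEntireDeriv (σ γ S D t₀ : ℂ) (hγ : γ ≠ 0) (t : ℂ) :
    HasDerivAt (fun s => (S * Complex.exp (σ * (s - t₀)) + D * Complex.exp (-σ * (s - t₀))) / 2)
      (σ * γ * ((S * Complex.exp (σ * (t - t₀)) - D * Complex.exp (-σ * (t - t₀))) / (2 * γ))) t ∧
    HasDerivAt (fun s => (S * Complex.exp (σ * (s - t₀)) - D * Complex.exp (-σ * (s - t₀))) / (2 * γ))
      (σ / γ * ((S * Complex.exp (σ * (t - t₀)) + D * Complex.exp (-σ * (t - t₀))) / 2)) t := by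
  have hE : HasDerivAt (fun s => Complex.exp (σ * (s - t₀)))
      (Complex.exp (σ * (t - t₀)) * (σ * 1)) t :=
    (((hasDerivAt_id t).sub_const t₀).const_mul σ).cexp
  have hF : HasDerivAt (fun s => Complex.exp (-σ * (s - t₀)))
      (Complex.exp (-σ * (t - t₀)) * (-σ * 1)) t :=
    (((hasDerivAt_id t).sub_const t₀).const_mul (-σ)).cexp
  constructor
  · have := ((hE.const_mul S).fun_add (hF.const_mul D)).div_const 2
    refine this.congr_deriv ?_
    field_simp
    ring
  · have := ((hE.const_mul S).fun_sub (hF.const_mul D)).div_const (2 * γ)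
    refine this.congr_deriv ?_
    field_simp
    ring

/-- For `a, b ∈ ℂ` with `ab(a+b) = 0`, the holomorphic vector field
`E(z) = (a z₂z₃, b z₁z₃, (a+b) z₁z₂)` on `ℂ³` is complete: every local holomorphic solution
of `ż = E(z)` (on a ball around a point) extends to an entire solution `ℂ → ℂ³`. -/
theorem eulerArnold_SL2C_complete_of_degenerate
    (a b : ℂ) (hab : a * b * (a + b) = 0) :
    ∀ (t₀ : ℂ) (r : ℝ), 0 < r →
      ∀ z₁ z₂ z₃ : ℂ → ℂ,
        (∀ t ∈ Metric.ball t₀ r, HasDerivAt z₁ (a * z₂ t * z₃ t) t) →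
        (∀ t ∈ Metric.ball t₀ r, HasDerivAt z₂ (b * z₁ t * z₃ t) t) →
        (∀ t ∈ Metric.ball t₀ r, HasDerivAt z₃ ((a + b) * z₁ t * z₂ t) t) →
        ∃ w₁ w₂ w₃ : ℂ → ℂ,
          (∀ t ∈ Metric.ball t₀ r, w₁ t = z₁ t ∧ w₂ t = z₂ t ∧ w₃ t = z₃ t) ∧
          (∀ t : ℂ, HasDerivAt w₁ (a * w₂ t * w₃ t) t) ∧
          (∀ t : ℂ, HasDerivAt w₂ (b * w₁ t * w₃ t) t) ∧
          (∀ t : ℂ, HasDerivAt w₃ ((a + b) * w₁ t * w₂ t) t) := by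
  intro t₀ r hr z₁ z₂ z₃ h1 h2 h3
  rcases mul_eq_zero.mp hab with h | hab0
  · rcases mul_eq_zero.mp h with ha | hb
    · -- a = 0 : z₁ constant
      have hz1 : ∀ t ∈ Metric.ball t₀ r, z₁ t = z₁ t₀ := by
        intro t ht
        have h := expODE 0 t₀ r hr z₁ (fun t ht => by simpa [ha] using h1 t ht) t ht
        simpa using h
      set c := z₁ t₀ with hc
      have hu : ∀ t ∈ Metric.ball t₀ r, HasDerivAt z₂ (b * c * 1 * z₃ t) t := by
        intro t ht
        have h := h2 t ht
        rw [hz1 t ht] at h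
        convert h using 1; ring
      have hv : ∀ t ∈ Metric.ball t₀ r, HasDerivAt z₃ (b * c / 1 * z₂ t) t := by
        intro t ht
        have h := h3 t ht
        rw [hz1 t ht] at h
        convert h using 1
        rw [ha]; ring
      have hsol := pairODE (b*c) 1 t₀ one_ne_zero r hr z₂ z₃ hu hv
      refine ⟨fun _ => c,
        fun s => ((z₂ t₀ + 1 * z₃ t₀) * Complex.exp (b*c * (s - t₀))
                + (z₂ t₀ - 1 * z₃ t₀) * Complex.exp (-(b*c) * (s - t₀))) / 2,
        fun s => ((z₂ t₀ + 1 * z₃ t₀) * Complex.exp (b*c * (s - t₀))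
                - (z₂ t₀ - 1 * z₃ t₀) * Complex.exp (-(b*c) * (s - t₀))) / (2*1),
        ?_, ?_, ?_, ?_⟩
      · intro t ht
        exact ⟨(hz1 t ht).symm, ((hsol t ht).1).symm, ((hsol t ht).2).symm⟩
      · intro t
        simp only [ha, zero_mul]
        exact hasDerivAt_const t c
      · intro t
        have h := (pairEntireDeriv (b*c) 1 (z₂ t₀ + 1 * z₃ t₀) (z₂ t₀ - 1 * z₃ t₀) t₀
          one_ne_zero t).1
        convert h using 1
        ring
      · intro t
        have h := (pairEntireDeriv (b*c) 1 (z₂ t₀ + 1 * z₃ t₀) (z₂ t₀ - 1 * z₃ t₀) t₀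
          one_ne_zero t).2
        convert h using 1
        rw [ha]; ring
    · -- b = 0 : z₂ constant
      have hz2 : ∀ t ∈ Metric.ball t₀ r, z₂ t = z₂ t₀ := by
        intro t ht
        have h := expODE 0 t₀ r hr z₂ (fun t ht => by simpa [hb] using h2 t ht) t ht
        simpa using h
      set c := z₂ t₀ with hc
      have hu : ∀ t ∈ Metric.ball t₀ r, HasDerivAt z₁ (a * c * 1 * z₃ t) t := by
        intro t ht
        have h := h1 t ht
        rw [hz2 t ht] at h
        convert h using 1; ring
      have hv : ∀ t ∈ Metric.ball t₀ r, HasDerivAt z₃ (a * c / 1 * z₁ t) t := by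
        intro t ht
        have h := h3 t ht
        rw [hz2 t ht] at h
        convert h using 1
        rw [hb]; ring
      have hsol := pairODE (a*c) 1 t₀ one_ne_zero r hr z₁ z₃ hu hv
      refine ⟨fun s => ((z₁ t₀ + 1 * z₃ t₀) * Complex.exp (a*c * (s - t₀))
                + (z₁ t₀ - 1 * z₃ t₀) * Complex.exp (-(a*c) * (s - t₀))) / 2,
        fun _ => c,
        fun s => ((z₁ t₀ + 1 * z₃ t₀) * Complex.exp (a*c * (s - t₀))
                - (z₁ t₀ - 1 * z₃ t₀) * Complex.exp (-(a*c) * (s - t₀))) / (2*1),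
        ?_, ?_, ?_, ?_⟩
      · intro t ht
        exact ⟨((hsol t ht).1).symm, (hz2 t ht).symm, ((hsol t ht).2).symm⟩
      · intro t
        have h := (pairEntireDeriv (a*c) 1 (z₁ t₀ + 1 * z₃ t₀) (z₁ t₀ - 1 * z₃ t₀) t₀
          one_ne_zero t).1
        convert h using 1
        ring
      · intro t
        simp only [hb, zero_mul]
        exact hasDerivAt_const t c
      · intro t
        have h := (pairEntireDeriv (a*c) 1 (z₁ t₀ + 1 * z₃ t₀) (z₁ t₀ - 1 * z₃ t₀) t₀
          one_ne_zero t).2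
        convert h using 1
        rw [hb]; ring
  · -- a + b = 0 : z₃ constant
    have hb' : b = -a := by linear_combination hab0
    have hz3 : ∀ t ∈ Metric.ball t₀ r, z₃ t = z₃ t₀ := by
      intro t ht
      have h := expODE 0 t₀ r hr z₃ (fun t ht => by simpa [hab0] using h3 t ht) t ht
      simpa using h
    set c := z₃ t₀ with hc
    set σ : ℂ := -Complex.I * (a * c) with hσ
    have hσI : σ * Complex.I = a * c := by
      rw [hσ]; linear_combination (-(a * c)) * Complex.I_mul_I
    have hσdI : σ / Complex.I = -(a * c) := by
      rw [hσ]; field_simp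
    have hu : ∀ t ∈ Metric.ball t₀ r, HasDerivAt z₁ (σ * Complex.I * z₂ t) t := by
      intro t ht
      have h := h1 t ht
      rw [hz3 t ht] at h
      convert h using 1
      rw [hσI]; ring
    have hv : ∀ t ∈ Metric.ball t₀ r, HasDerivAt z₂ (σ / Complex.I * z₁ t) t := by
      intro t ht
      have h := h2 t ht
      rw [hz3 t ht] at h
      convert h using 1
      rw [hσdI, hb']; ring
    have hsol := pairODE σ Complex.I t₀ Complex.I_ne_zero r hr z₁ z₂ hu hv
    refine ⟨fun s => ((z₁ t₀ + Complex.I * z₂ t₀) * Complex.exp (σ * (s - t₀))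
              + (z₁ t₀ - Complex.I * z₂ t₀) * Complex.exp (-σ * (s - t₀))) / 2,
      fun s => ((z₁ t₀ + Complex.I * z₂ t₀) * Complex.exp (σ * (s - t₀))
              - (z₁ t₀ - Complex.I * z₂ t₀) * Complex.exp (-σ * (s - t₀))) / (2 * Complex.I),
      fun _ => c,
      ?_, ?_, ?_, ?_⟩
    · intro t ht
      exact ⟨((hsol t ht).1).symm, ((hsol t ht).2).symm, (hz3 t ht).symm⟩
    · intro t
      have h := (pairEntireDeriv σ Complex.I (z₁ t₀ + Complex.I * z₂ t₀)
        (z₁ t₀ - Complex.I * z₂ t₀) t₀ Complex.I_ne_zero t).1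
      convert h using 1
      rw [hσI]; ring
    · intro t
      have h := (pairEntireDeriv σ Complex.I (z₁ t₀ + Complex.I * z₂ t₀)
        (z₁ t₀ - Complex.I * z₂ t₀) t₀ Complex.I_ne_zero t).2
      convert h using 1
      rw [hσdI, hb']; ring
    · intro t
      simp only [hab0, zero_mul]
      exact hasDerivAt_const t c
end
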